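/- arXiv:1602.05491 — 10 statements merged into one kernel-verified Lean document; each statement's English description precedes it below -/
import Mathlib

section
/- Let f : ℕ → ℝ be a sequence and ε : ℕ → ℝ a sequence of non-negative numbers such that ε(n)/n → 0 as n → ∞ and ∑_{n=1}^∞ ε(2^n)/2^n < ∞. Assume f is almost super-additive relative to ε, i.e. f(n+m) ≥ f(n) + f(m) − ε(n+m) for all n, m ≥ 1. Then: (1) if sup_{n≥1} f(n)/n < +∞, the limit lim_{n→∞} f(n)/n exists and is finite; (2) if sup_{n≥1} f(n)/n = +∞, then f(n)/n → +∞ as n → ∞. -/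
open Filter Topology Finset

private lemma lemB (f ε : ℕ → ℝ)
    (hsuper : ∀ m n : ℕ, 1 ≤ m → 1 ≤ n → f (n + m) ≥ f n + f m - ε (n + m))
    (s : ℕ) (b δ C : ℝ) (hδ : 0 ≤ δ) (hC : 0 ≤ C)
    (hpow : ∀ k, s ≤ k → f (2 ^ k) ≥ b * 2 ^ k)
    (hεb : ∀ p : ℕ, 2 ^ s ≤ p → ε p ≤ δ * p)
    (hsmall : ∀ r : ℕ, 1 ≤ r → r < 2 ^ s → f r ≥ -C) :
    ∀ n : ℕ, 2 ^ s ≤ n →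
      f n ≥ b * ((n : ℝ) - ((n % 2 ^ s : ℕ) : ℝ)) - C - 2 * δ * n := by
  intro n
  induction n using Nat.strong_induction_on with
  | _ n ih =>
    intro hn
    have hs1 : (1:ℕ) ≤ 2 ^ s := Nat.one_le_two_pow
    have hn1 : 1 ≤ n := le_trans hs1 hn
    set k := Nat.log 2 n with hk
    have h1 : 2 ^ k ≤ n := Nat.pow_log_le_self 2 (by omega)
    have h2 : n < 2 ^ (k + 1) := Nat.lt_pow_succ_log_self (by norm_num) n
    have hsk : s ≤ k := by
      have h3 : 2 ^ s < 2 ^ (k+1) := lt_of_le_of_lt hn h2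
      have := (Nat.pow_lt_pow_iff_right (by norm_num : 1 < 2)).1 h3
      omega
    have h2k1 : (2:ℕ) ^ (k+1) = 2 ^ k + 2 ^ k := by ring
    set m := n - 2 ^ k with hm
    have hnm : n = 2 ^ k + m := by omega
    have hmlt : m < 2 ^ k := by omega
    have h2m : 2 * m ≤ n := by omega
    obtain ⟨t, ht⟩ : (2:ℕ)^s ∣ 2^k := pow_dvd_pow 2 hsk
    have h2kr : (0:ℝ) < 2 ^ k := by positivity
    have hδn : (0:ℝ) ≤ δ * n := by positivity
    rcases Nat.eq_zero_or_pos m with hm0 | hm1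
    · have hmod : n % 2 ^ s = 0 := by
        rw [show n = 2^s * t by omega, Nat.mul_mod_right]
      have hp := hpow k hsk
      have hne : n = 2 ^ k := by omega
      rw [hmod, hne]
      push_cast
      nlinarith [hp]
    · have hsup := hsuper m (2^k) hm1 Nat.one_le_two_pow
      rw [← hnm] at hsup
      have hεn : ε n ≤ δ * n := hεb n hn
      have hp := hpow k hsk
      rcases lt_or_ge m (2 ^ s) with hms | hms
      · have hmod2 : n % 2 ^ s = m := by
          rw [show n = 2^s * t + m by omega, Nat.mul_add_mod, Nat.mod_eq_of_lt hms]
        have hfm := hsmall m hm1 hms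
        rw [hmod2]
        have hcast : ((n:ℝ)) = 2^k + (m:ℝ) := by rw [hnm]; push_cast; ring
        rw [hcast]
        nlinarith [hp, hfm, hεn, hsup]
      · have hihm := ih m (by omega) hms
        have hmod : n % 2 ^ s = m % 2 ^ s := by
          rw [show n = 2^s * t + m by omega, Nat.mul_add_mod]
        rw [hmod]
        have hcast : ((n:ℝ)) = 2^k + (m:ℝ) := by rw [hnm]; push_cast; ring
        have h2m' : 2 * (m:ℝ) ≤ n := by exact_mod_cast h2m
        have hkey : δ * (2 * m) ≤ δ * n := mul_le_mul_of_nonneg_left h2m' hδ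
        rw [hcast]
        nlinarith [hp, hεn, hsup, hihm, hkey]


/-- Almost super-additivity: if `f (n+m) ≥ f n + f m - ε (n+m)` for `n, m ≥ 1`, with
`ε n / n → 0` and `∑_{n≥1} ε (2^n) / 2^n < ∞`, then either `f n / n` converges to a
finite limit (when the ratios are bounded above) or diverges to `+∞` (otherwise). -/
theorem almost_superadditive_limit (f ε : ℕ → ℝ)
    (hε_nonneg : ∀ n, 0 ≤ ε n)
    (hε_lim : Tendsto (fun n : ℕ => ε n / n) atTop (𝓝 0))
    (hε_sum : Summable (fun n : ℕ => ε (2 ^ (n + 1)) / 2 ^ (n + 1)))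
    (hsuper : ∀ m n : ℕ, 1 ≤ m → 1 ≤ n → f (n + m) ≥ f n + f m - ε (n + m)) :
    (BddAbove {x : ℝ | ∃ n : ℕ, 1 ≤ n ∧ x = f n / n} →
      ∃ L : ℝ, Tendsto (fun n : ℕ => f n / n) atTop (𝓝 L)) ∧
    (¬ BddAbove {x : ℝ | ∃ n : ℕ, 1 ≤ n ∧ x = f n / n} →
      Tendsto (fun n : ℕ => f n / n) atTop atTop) := by
  -- ε p ≤ δ p for p large
  have hεev : ∀ δ : ℝ, 0 < δ → ∃ N : ℕ, ∀ p : ℕ, N ≤ p → ε p ≤ δ * p := by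
    intro δ hδ
    obtain ⟨N, hN⟩ := eventually_atTop.1
      ((hε_lim.eventually (gt_mem_nhds hδ)).and (eventually_ge_atTop 1))
    refine ⟨N, fun p hp => ?_⟩
    obtain ⟨h1, h2⟩ := hN p hp
    have hp0 : (0:ℝ) < p := by exact_mod_cast h2
    have := (div_lt_iff₀ hp0).1 h1
    linarith
  obtain ⟨a, ha⟩ : ∃ a : ℕ → ℝ, ∀ k, a k = f (2 ^ k) / 2 ^ k := ⟨_, fun _ => rfl⟩
  obtain ⟨e, hedef⟩ : ∃ e : ℕ → ℝ, ∀ j, e j = ε (2 ^ (j + 1)) / 2 ^ (j + 1) :=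
    ⟨_, fun _ => rfl⟩
  have hsum_e : Summable e := (summable_congr hedef).2 hε_sum
  have he0 : ∀ j, 0 ≤ e j := fun j => by
    rw [hedef]; exact div_nonneg (hε_nonneg _) (by positivity)
  obtain ⟨E, hEdef⟩ : ∃ E : ℝ, E = ∑' j, e j := ⟨_, rfl⟩
  obtain ⟨S, hSdef⟩ : ∃ S : ℕ → ℝ, ∀ k, S k = ∑ j ∈ Finset.range k, e j :=
    ⟨_, fun _ => rfl⟩
  obtain ⟨c, hcdef⟩ : ∃ c : ℕ → ℝ, ∀ k, c k = a k + S k := ⟨_, fun _ => rfl⟩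
  -- one-step estimate
  have hstep : ∀ k, a k - e k ≤ a (k + 1) := by
    intro k
    have h1 : (1:ℕ) ≤ 2 ^ k := Nat.one_le_two_pow
    have hsup := hsuper (2^k) (2^k) h1 h1
    rw [show (2:ℕ)^k + 2^k = 2^(k+1) by ring] at hsup
    have h2k : (0:ℝ) < 2 ^ k := by positivity
    have h2k1 : (0:ℝ) < 2 ^ (k+1) := by positivity
    have e2 : a k - e k = (2 * f (2^k) - ε (2^(k+1))) / 2^(k+1) := by
      rw [ha, hedef]
      rw [pow_succ]
      field_simp
      ring
    rw [e2, ha]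
    have hle : (2 * f (2^k) - ε (2^(k+1))) ≤ f (2^(k+1)) := by linarith
    exact div_le_div_of_nonneg_right hle h2k1.le
  have cmono : Monotone c := by
    refine monotone_nat_of_le_succ (fun k => ?_)
    have h1 := hstep k
    have h2 : S (k+1) = S k + e k := by rw [hSdef, hSdef, Finset.sum_range_succ]
    rw [hcdef, hcdef, h2]
    linarith
  have hSleE : ∀ k, S k ≤ E := fun k => by
    rw [hSdef, hEdef]
    exact Summable.sum_le_tsum (Finset.range k) (fun i _ => he0 i) hsum_e
  have hStend : Tendsto S atTop (𝓝 E) := by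
    rw [hEdef]
    exact Tendsto.congr (fun k => (hSdef k).symm) hsum_e.hasSum.tendsto_sum_nat
  have hpow : ∀ s k, s ≤ k → f (2 ^ k) ≥ (c s - E) * 2 ^ k := by
    intro s k hsk
    have h1 : c s ≤ c k := cmono hsk
    have h2 : S k ≤ E := hSleE k
    have h3 : c k = a k + S k := hcdef k
    have h2k : (0:ℝ) < 2 ^ k := by positivity
    have h4 : c s - E ≤ f (2^k) / 2^k := by
      have h5 : a k = f (2^k) / 2^k := ha k
      linarith
    have := mul_le_mul_of_nonneg_right h4 h2k.le
    rw [div_mul_cancel₀ _ h2k.ne'] at this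
    exact this
  -- lower bound machinery
  have lower : ∀ b δ : ℝ, 0 < δ → ∀ s₀ : ℕ, (∀ k, s₀ ≤ k → f (2 ^ k) ≥ b * 2 ^ k) →
      ∀ᶠ n : ℕ in atTop, b - 3 * δ ≤ f n / n := by
    intro b δ hδ s₀ hb
    obtain ⟨N, hN⟩ := hεev δ hδ
    obtain ⟨s, hss, hsN⟩ : ∃ s : ℕ, s₀ ≤ s ∧ N ≤ 2 ^ s :=
      ⟨max s₀ N, le_max_left _ _,
        le_trans (@Nat.lt_two_pow_self N).le (Nat.pow_le_pow_right (by norm_num) (le_max_right _ _))⟩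
    have hεb : ∀ p : ℕ, 2 ^ s ≤ p → ε p ≤ δ * p := fun p hp => hN p (le_trans hsN hp)
    have hpow' : ∀ k, s ≤ k → f (2 ^ k) ≥ b * 2 ^ k := fun k hk => hb k (le_trans hss hk)
    obtain ⟨c0, hc0⟩ := ((Set.finite_Icc 1 (2^s)).image f).bddBelow
    obtain ⟨C, hC0, hCc⟩ : ∃ C : ℝ, 0 ≤ C ∧ -C ≤ c0 :=
      ⟨max 0 (-c0), le_max_left _ _, by
        have := le_max_right 0 (-c0); linarith⟩
    have hsmall : ∀ r : ℕ, 1 ≤ r → r < 2 ^ s → f r ≥ -C := by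
      intro r hr1 hr2
      have hmem : f r ∈ f '' Set.Icc 1 (2^s) := ⟨r, ⟨hr1, hr2.le⟩, rfl⟩
      have := hc0 hmem
      linarith
    have hB := lemB f ε hsuper s b δ C hδ.le hC0 hpow' hεb hsmall
    obtain ⟨M, hM⟩ := exists_nat_ge ((|b| * 2^s + C) / δ)
    filter_upwards [eventually_ge_atTop (max (2^s) M)] with n hn
    have hn2s : 2^s ≤ n := le_trans (le_max_left _ _) hn
    have hnM : (M:ℝ) ≤ n := Nat.cast_le.2 (le_trans (le_max_right _ _) hn)
    have hn1 : (1:ℕ) ≤ n := le_trans Nat.one_le_two_pow hn2s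
    have hn0 : (0:ℝ) < n := by exact_mod_cast hn1
    have hK : |b| * 2^s + C ≤ δ * n := by
      have h1 := (div_le_iff₀ hδ).1 hM
      nlinarith
    have hBn := hB n hn2s
    have hrlt : ((n % 2^s : ℕ):ℝ) < 2^s := by
      have := Nat.mod_lt n (show 0 < 2^s by positivity)
      exact_mod_cast this
    have hr0 : (0:ℝ) ≤ ((n % 2^s : ℕ):ℝ) := Nat.cast_nonneg _
    have hbr : b * ((n % 2^s : ℕ):ℝ) ≤ |b| * 2^s := by
      calc b * ((n % 2^s : ℕ):ℝ) ≤ |b| * ((n % 2^s : ℕ):ℝ) :=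
            mul_le_mul_of_nonneg_right (le_abs_self b) hr0
        _ ≤ |b| * 2^s := mul_le_mul_of_nonneg_left hrlt.le (abs_nonneg b)
    rw [le_div_iff₀ hn0]
    nlinarith [hBn, hbr, hK]
  -- finite case
  have finCase : BddAbove (Set.range c) →
      ∃ L : ℝ, Tendsto (fun n : ℕ => f n / n) atTop (𝓝 L) := by
    intro hbdd
    obtain ⟨L₀, hL₀⟩ : ∃ L₀ : ℝ, L₀ = ⨆ k, c k := ⟨_, rfl⟩
    have hctend : Tendsto c atTop (𝓝 L₀) := by
      rw [hL₀]; exact tendsto_atTop_ciSup cmono hbdd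
    obtain ⟨L, hL⟩ : ∃ L : ℝ, L = L₀ - E := ⟨_, rfl⟩
    have hatend : Tendsto a atTop (𝓝 L) := by
      rw [hL]
      have h : ∀ k, c k - S k = a k := fun k => by
        have := hcdef k; linarith
      exact Tendsto.congr h (hctend.sub hStend)
    refine ⟨L, ?_⟩
    rw [Metric.tendsto_atTop]
    intro ξ hξ
    obtain ⟨δ, hδdef, hδ⟩ : ∃ δ : ℝ, δ = ξ / 10 ∧ 0 < δ := ⟨_, rfl, by positivity⟩
    have hlow : ∀ᶠ n : ℕ in atTop, L - 4*δ ≤ f n / n := by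
      obtain ⟨s, hs⟩ : ∃ s, L₀ - δ < c s := by
        rw [hL₀]
        exact exists_lt_of_lt_ciSup (by rw [← hL₀]; linarith)
      filter_upwards [lower (c s - E) δ hδ s (hpow s)] with n hn
      linarith
    obtain ⟨M₁, hM₁⟩ := eventually_atTop.1 hlow
    obtain ⟨M', hM'₁, hM'one⟩ : ∃ M' : ℕ, M₁ ≤ M' ∧ 1 ≤ M' :=
      ⟨max M₁ 1, le_max_left _ _, le_max_right _ _⟩
    obtain ⟨c1, hc1⟩ := ((Set.finite_Icc 1 M').image f).bddBelow
    obtain ⟨D, hD0, hDc⟩ : ∃ D : ℝ, 0 ≤ D ∧ |L - 4*δ| * M' - c1 ≤ D :=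
      ⟨max 0 (|L - 4*δ| * M' - c1), le_max_left _ _, le_max_right _ _⟩
    have hfD : ∀ p : ℕ, 1 ≤ p → f p ≥ (L - 4*δ) * p - D := by
      intro p hp
      rcases le_or_gt M' p with h | h
      · have h1 : L - 4*δ ≤ f p / p := hM₁ p (le_trans hM'₁ h)
        have hp0 : (0:ℝ) < p := by exact_mod_cast hp
        have h2 := (le_div_iff₀ hp0).1 h1
        linarith
      · have hmem : f p ∈ f '' Set.Icc 1 M' := ⟨p, ⟨hp, h.le⟩, rfl⟩
        have h1 : c1 ≤ f p := hc1 hmem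
        have hpM : (p:ℝ) ≤ M' := by exact_mod_cast h.le
        have hp0 : (0:ℝ) ≤ p := Nat.cast_nonneg p
        have h2 : (L - 4*δ) * p ≤ |L - 4*δ| * M' := by
          calc (L - 4*δ) * p ≤ |L - 4*δ| * p :=
                mul_le_mul_of_nonneg_right (le_abs_self _) hp0
            _ ≤ |L - 4*δ| * M' := mul_le_mul_of_nonneg_left hpM (abs_nonneg _)
        linarith
    have hup : ∀ᶠ n : ℕ in atTop, f n / n ≤ L + 9*δ := by
      have hae : ∀ᶠ k in atTop, a k < L + δ := hatend.eventually_lt_const (by linarith)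
      obtain ⟨K₁, hK₁⟩ := eventually_atTop.1 hae
      obtain ⟨N₂, hN₂⟩ := hεev δ hδ
      obtain ⟨M₃, hM₃⟩ := exists_nat_ge (D / δ)
      filter_upwards [eventually_ge_atTop (max (2^K₁) (max N₂ (max M₃ 1)))] with n hn
      have hnK : 2^K₁ ≤ n := le_trans (le_max_left _ _) hn
      have hnN : N₂ ≤ n := le_trans (le_trans (le_max_left _ _) (le_max_right _ _)) hn
      have hnM₃ : M₃ ≤ n :=
        le_trans (le_trans (le_trans (le_max_left _ _) (le_max_right _ _)) (le_max_right _ _)) hn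
      have hn1 : 1 ≤ n :=
        le_trans (le_trans (le_trans (le_max_right _ _) (le_max_right _ _)) (le_max_right _ _)) hn
      obtain ⟨k, hkdef⟩ : ∃ k : ℕ, k = Nat.log 2 n := ⟨_, rfl⟩
      have h1 : 2^k ≤ n := by rw [hkdef]; exact Nat.pow_log_le_self 2 (by omega)
      have h2 : n < 2^(k+1) := by rw [hkdef]; exact Nat.lt_pow_succ_log_self (by norm_num) n
      have hK₁k : K₁ ≤ k + 1 := by
        have h3 : 2^K₁ < 2^(k+1) := lt_of_le_of_lt hnK h2
        have := (Nat.pow_lt_pow_iff_right (by norm_num : 1 < 2)).1 h3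
        omega
      obtain ⟨p, hpdef⟩ : ∃ p : ℕ, p = 2^(k+1) - n := ⟨_, rfl⟩
      have h2k1n : (2:ℕ)^(k+1) = 2^k + 2^k := by ring
      have hp1 : 1 ≤ p := by omega
      have hnp : n + p = 2^(k+1) := by omega
      have hsup := hsuper p n hp1 hn1
      rw [hnp] at hsup
      have hfp := hfD p hp1
      have hak : a (k+1) < L + δ := hK₁ (k+1) hK₁k
      have h2k1 : (0:ℝ) < 2^(k+1) := by positivity
      have hfa : f (2^(k+1)) ≤ (L + δ) * 2^(k+1) := by
        have he1 : a (k+1) = f (2^(k+1)) / 2^(k+1) := ha (k+1)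
        rw [he1] at hak
        have := (div_lt_iff₀ h2k1).1 hak
        linarith
      have hεk : ε (2^(k+1)) ≤ δ * 2^(k+1) := by
        have h4 := hN₂ (2^(k+1)) (by omega)
        push_cast at h4
        exact h4
      have hDδ : D ≤ δ * n := by
        have h5 := (div_le_iff₀ hδ).1 hM₃
        have h6 : (M₃:ℝ) ≤ n := by exact_mod_cast hnM₃
        nlinarith
      have hpn : (p:ℝ) = 2^(k+1) - n := by
        have : ((n:ℝ)) + p = 2^(k+1) := by exact_mod_cast hnp
        linarith
      have h2n : ((2:ℝ))^(k+1) ≤ 2 * n := by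
        have h7 : (2:ℝ)^k ≤ n := by exact_mod_cast h1
        rw [pow_succ]
        linarith
      have hn0 : (0:ℝ) < n := by exact_mod_cast hn1
      rw [div_le_iff₀ hn0]
      rw [hpn] at hfp
      have hint : 6*δ*(2^(k+1):ℝ) ≤ 6*δ*(2*n) :=
        mul_le_mul_of_nonneg_left h2n (by positivity : (0:ℝ) ≤ 6*δ)
      linarith [hsup, hfp, hfa, hεk, hDδ, hint]
    obtain ⟨N₀, hN₀⟩ := eventually_atTop.1 (hlow.and hup)
    refine ⟨N₀, fun n hn => ?_⟩
    obtain ⟨ha1, ha2⟩ := hN₀ n hn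
    rw [Real.dist_eq, abs_lt]
    constructor <;> linarith
  -- divergent case
  have topCase : ¬BddAbove (Set.range c) →
      Tendsto (fun n : ℕ => f n / n) atTop atTop := by
    intro hnb
    rw [tendsto_atTop]
    intro M
    obtain ⟨y, ⟨s, rfl⟩, hy⟩ := not_bddAbove_iff.1 hnb (M + E + 3)
    filter_upwards [lower (c s - E) 1 one_pos s (hpow s)] with n hn
    linarith
  constructor
  · intro hb
    apply finCase
    obtain ⟨B, hB⟩ := hb
    refine ⟨B + E, ?_⟩
    rintro x ⟨k, rfl⟩
    have h1 : a k ≤ B := by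
      refine hB ⟨2^k, Nat.one_le_two_pow, ?_⟩
      rw [ha k]
      push_cast
      rfl
    have h2 : S k ≤ E := hSleE k
    have h3 : c k = a k + S k := hcdef k
    rw [h3]
    linarith
  · intro hnb
    by_cases hcb : BddAbove (Set.range c)
    · exfalso
      obtain ⟨L, hL⟩ := finCase hcb
      apply hnb
      refine BddAbove.mono ?_ hL.bddAbove_range
      rintro x ⟨n, hn, rfl⟩
      exact ⟨n, rfl⟩
    · exact topCase hcb
end

section
/- For every H ∈ (0,1) there exists a constant C > 0 depending only on H such that for all positive integers n and k and all real u, v with n+k ≤ u, v ≤ n+k+1, one has ∫₀ⁿ ( (u−s)^{H−3/2} (u/s)^{H−1/2} − (v−s)^{H−3/2} (v/s)^{H−1/2} )² ds ≤ C (1 + k/n)^{2H−1} k^{2H−4} (u−v)². -/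
open MeasureTheory Set

lemma rpow_lip {p c x y : ℝ} (hc : 0 < c) (hx : c ≤ x) (hy : c ≤ y)
    (hp1 : p ≤ 1) (hp2 : |p| ≤ 3/2) :
    |x ^ p - y ^ p| ≤ 3/2 * c ^ (p - 1) * |x - y| := by
  have hder : ∀ z ∈ Ici c, HasDerivWithinAt (fun t : ℝ => t ^ p) (p * z ^ (p - 1)) (Ici c) z := by
    intro z hz
    exact (Real.hasDerivAt_rpow_const (Or.inl (ne_of_gt (lt_of_lt_of_le hc hz)))).hasDerivWithinAt
  have hbound : ∀ z ∈ Ici c, ‖p * z ^ (p - 1)‖ ≤ 3/2 * c ^ (p - 1) := by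
    intro z hz
    have hz' : (0:ℝ) ≤ z := le_trans hc.le hz
    rw [Real.norm_eq_abs, abs_mul, abs_of_nonneg (Real.rpow_nonneg hz' _)]
    have h1 : z ^ (p - 1) ≤ c ^ (p - 1) :=
      Real.rpow_le_rpow_of_nonpos hc hz (by linarith)
    have h2 : (0:ℝ) ≤ z ^ (p - 1) := Real.rpow_nonneg hz' _
    nlinarith [abs_nonneg p]
  have := (convex_Ici c).norm_image_sub_le_of_norm_hasDerivWithin_le hder hbound hy hx
  simpa [Real.norm_eq_abs] using this

lemma rpow_double {x y q : ℝ} (hx : 0 < x) (hy : 0 < y) (h1 : x ≤ 2*y) (h2 : y ≤ 2*x)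
    (hq : |q| ≤ 1) : x ^ q ≤ 2 * y ^ q := by
  obtain ⟨hq1, hq2⟩ := abs_le.1 hq
  have hyq : (0:ℝ) ≤ y ^ q := Real.rpow_nonneg hy.le q
  rcases le_or_gt 0 q with h | h
  · calc x ^ q ≤ (2*y) ^ q := Real.rpow_le_rpow hx.le h1 h
      _ = 2 ^ q * y ^ q := Real.mul_rpow (by norm_num) hy.le
      _ ≤ 2 * y ^ q := by
        have h2q : (2:ℝ) ^ q ≤ 2 ^ (1:ℝ) := Real.rpow_le_rpow_of_exponent_le one_le_two hq2
        rw [Real.rpow_one] at h2q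
        nlinarith
  · have hy2 : y/2 ≤ x := by linarith
    calc x ^ q ≤ (y/2) ^ q := Real.rpow_le_rpow_of_nonpos (by linarith) hy2 h.le
      _ = y ^ q / 2 ^ q := Real.div_rpow hy.le (by norm_num) q
      _ ≤ 2 * y ^ q := by
        have h2q : (2:ℝ) ^ (-1:ℝ) ≤ 2 ^ q := Real.rpow_le_rpow_of_exponent_le one_le_two (by linarith)
        rw [Real.rpow_neg_one] at h2q
        rw [div_le_iff₀ (by positivity : (0:ℝ) < 2 ^ q)]
        nlinarith

lemma rpow_sq {x : ℝ} (hx : 0 < x) (p : ℝ) : (x ^ p) ^ 2 = x ^ (2*p) := by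
  rw [sq, ← Real.rpow_add hx]; ring_nf

lemma pointwise_bound {H a b u v s : ℝ} (hH1 : 0 < H) (hH2 : H < 1)
    (ha : 1 ≤ a) (hb : 1 ≤ b)
    (h1u : a + b ≤ u) (h2u : u ≤ a + b + 1) (h1v : a + b ≤ v) (h2v : v ≤ a + b + 1)
    (hs0 : 0 < s) (hsa : s < a) :
    ((u - s) ^ (H - 3/2) * (u / s) ^ (H - 1/2)
      - (v - s) ^ (H - 3/2) * (v / s) ^ (H - 1/2)) ^ 2
    ≤ 81/4 * (u - v)^2 * (a+b) ^ (2*H-1)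
        * (s ^ (1-2*H) * ((a+b) - s) ^ (2*H-5)) := by
  set c : ℝ := a + b with hc_def
  have hc : 0 < c := by rw [hc_def]; linarith
  have hcs : 0 < c - s := by rw [hc_def]; linarith
  have hus : c - s ≤ u - s := by linarith
  have hvs : c - s ≤ v - s := by linarith
  have hcspos : 0 < c / s := by positivity
  have hu0 : (0:ℝ) < u := by linarith
  have hcsu : c / s ≤ u / s := by gcongr
  have hcsv : c / s ≤ v / s := by gcongr
  have hc2 : 2 ≤ c := by rw [hc_def]; linarith
  -- abbreviations
  have hAv : (v - s) ^ (H - 3/2) ≤ (c - s) ^ (H - 3/2) :=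
    Real.rpow_le_rpow_of_nonpos hcs hvs (by linarith)
  have hAv0 : (0:ℝ) ≤ (v - s) ^ (H - 3/2) := Real.rpow_nonneg (by linarith) _
  have hBu : (u / s) ^ (H - 1/2) ≤ 2 * (c / s) ^ (H - 1/2) := by
    refine rpow_double (div_pos hu0 hs0) hcspos ?_ ?_ (by rw [abs_le]; constructor <;> linarith)
    · rw [div_le_iff₀ hs0]
      have : u ≤ 2 * c := by linarith
      calc u ≤ 2*c := this
        _ = 2 * (c/s) * s := by field_simp
    · rw [div_le_iff₀ hs0]
      calc c ≤ 2*u := by linarith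
        _ = 2 * (u/s) * s := by field_simp
  have hBu0 : (0:ℝ) ≤ (u / s) ^ (H - 1/2) := Real.rpow_nonneg (div_pos hu0 hs0).le _
  have habs1 : |(u - s) ^ (H - 3/2) - (v - s) ^ (H - 3/2)|
      ≤ 3/2 * (c - s) ^ (H - 5/2) * |u - v| := by
    have := rpow_lip (p := H - 3/2) hcs hus hvs (by linarith)
      (by rw [abs_le]; constructor <;> linarith)
    have e : (u - s) - (v - s) = u - v := by ring
    rw [e] at this
    rw [show H - 5/2 = H - 3/2 - 1 by ring]
    exact this
  have habs2 : |(u / s) ^ (H - 1/2) - (v / s) ^ (H - 1/2)|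
      ≤ 3/2 * (c / s) ^ (H - 1/2 - 1) * (|u - v| / s) := by
    have := rpow_lip (p := H - 1/2) hcspos hcsu hcsv (by linarith)
      (by rw [abs_le]; constructor <;> linarith)
    rwa [div_sub_div_same, abs_div, abs_of_pos hs0] at this
  -- the key Lipschitz bound
  set D : ℝ := (c - s) ^ (H - 5/2) * (c / s) ^ (H - 1/2) with hD_def
  have hD0 : 0 ≤ D := mul_nonneg (Real.rpow_nonneg hcs.le _) (Real.rpow_nonneg hcspos.le _)
  have hdiff : |(u - s) ^ (H - 3/2) * (u / s) ^ (H - 1/2)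
      - (v - s) ^ (H - 3/2) * (v / s) ^ (H - 1/2)| ≤ 9/2 * D * |u - v| := by
    have split : (u - s) ^ (H - 3/2) * (u / s) ^ (H - 1/2)
        - (v - s) ^ (H - 3/2) * (v / s) ^ (H - 1/2)
        = ((u - s) ^ (H - 3/2) - (v - s) ^ (H - 3/2)) * (u / s) ^ (H - 1/2)
          + (v - s) ^ (H - 3/2) * ((u / s) ^ (H - 1/2) - (v / s) ^ (H - 1/2)) := by ring
    rw [split]
    have tri := abs_add_le (((u - s) ^ (H - 3/2) - (v - s) ^ (H - 3/2)) * (u / s) ^ (H - 1/2))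
      ((v - s) ^ (H - 3/2) * ((u / s) ^ (H - 1/2) - (v / s) ^ (H - 1/2)))
    rw [abs_mul, abs_mul, abs_of_nonneg hBu0, abs_of_nonneg hAv0] at tri
    refine tri.trans ?_
    have term1 : |(u - s) ^ (H - 3/2) - (v - s) ^ (H - 3/2)| * (u / s) ^ (H - 1/2)
        ≤ 3 * D * |u - v| := by
      calc |(u - s) ^ (H - 3/2) - (v - s) ^ (H - 3/2)| * (u / s) ^ (H - 1/2)
          ≤ (3/2 * (c - s) ^ (H - 5/2) * |u - v|) * (2 * (c / s) ^ (H - 1/2)) := by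
            apply mul_le_mul habs1 hBu hBu0
            positivity
        _ = 3 * D * |u - v| := by rw [hD_def]; ring
    have term2 : (v - s) ^ (H - 3/2) * |(u / s) ^ (H - 1/2) - (v / s) ^ (H - 1/2)|
        ≤ 3/2 * D * |u - v| := by
      calc (v - s) ^ (H - 3/2) * |(u / s) ^ (H - 1/2) - (v / s) ^ (H - 1/2)|
          ≤ (c - s) ^ (H - 3/2) * (3/2 * (c / s) ^ (H - 1/2 - 1) * (|u - v| / s)) := by
            apply mul_le_mul hAv habs2 (abs_nonneg _) (Real.rpow_nonneg hcs.le _)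
        _ = 3/2 * D * |u - v| * ((c - s)/c) := by
            rw [hD_def, show H - 1/2 - 1 = (H - 1/2) + (-1) by ring,
              Real.rpow_add hcspos, Real.rpow_neg_one,
              show H - 3/2 = (H - 5/2) + 1 by ring, Real.rpow_add hcs, Real.rpow_one]
            field_simp
        _ ≤ 3/2 * D * |u - v| * 1 := by
            apply mul_le_mul_of_nonneg_left _ (by positivity)
            rw [div_le_one hc]; linarith
        _ = 3/2 * D * |u - v| := by ring
    linarith
  -- square it
  have hsq : ((u - s) ^ (H - 3/2) * (u / s) ^ (H - 1/2)
      - (v - s) ^ (H - 3/2) * (v / s) ^ (H - 1/2)) ^ 2 ≤ (9/2 * D * |u - v|) ^ 2 := by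
    rw [← sq_abs]
    exact pow_le_pow_left₀ (abs_nonneg _) hdiff 2
  refine hsq.trans ?_
  have e1 : (9/2 * D * |u - v|) ^ 2 = 81/4 * (u - v)^2 * (D^2) := by
    rw [mul_pow, mul_pow, sq_abs]; ring
  have e2 : D^2 = (c - s) ^ (2*H - 5) * (c ^ (2*H - 1) * s ^ (1 - 2*H)) := by
    rw [hD_def, mul_pow, rpow_sq hcs, rpow_sq hcspos,
      show 2*(H - 5/2) = 2*H - 5 by ring, show 2*(H - 1/2) = 2*H - 1 by ring,
      Real.div_rpow hc.le hs0.le, show (1 - 2*H) = -(2*H - 1) by ring,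
      Real.rpow_neg hs0.le, div_eq_mul_inv]
  rw [e1, e2]
  exact le_of_eq (by ring)


lemma h_integrable {H a b : ℝ} (hH1 : 0 < H) (hH2 : H < 1) (ha : 1 ≤ a) (hb : 1 ≤ b) :
    IntegrableOn (fun s : ℝ => s ^ (1-2*H) * ((a+b) - s) ^ (2*H-5)) (Ioc 0 a) volume := by
  set c : ℝ := a + b with hc_def
  have hc : 0 < c := by rw [hc_def]; linarith
  have hcont : ContinuousOn (fun s : ℝ => s ^ (1-2*H) * (c - s) ^ (2*H-5)) (Ioc 0 a) := by
    apply ContinuousOn.mul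
    · exact continuousOn_id.rpow_const fun s hs => Or.inl (ne_of_gt hs.1)
    · refine (continuousOn_const.sub continuousOn_id).rpow_const fun s hs => Or.inl ?_
      have : s ≤ a := hs.2
      have : 0 < c - s := by rw [hc_def]; linarith
      exact ne_of_gt this
  have hg : IntegrableOn (fun s : ℝ => s ^ (1-2*H) * b ^ (2*H-5)) (Ioc 0 a) volume := by
    have h1 : IntervalIntegrable (fun s : ℝ => s ^ (1-2*H)) volume 0 a :=
      intervalIntegral.intervalIntegrable_rpow' (by linarith)
    exact ((intervalIntegrable_iff_integrableOn_Ioc_of_le (by linarith : (0:ℝ) ≤ a)).1 h1).mul_const _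
  refine hg.mono' (hcont.aestronglyMeasurable measurableSet_Ioc) ?_
  rw [ae_restrict_iff' measurableSet_Ioc]
  refine ae_of_all _ fun s hs => ?_
  have hs0 : 0 < s := hs.1
  have hcs : 0 < c - s := by rw [hc_def]; linarith [hs.2]
  rw [Real.norm_eq_abs, abs_of_nonneg (mul_nonneg (Real.rpow_nonneg hs0.le _) (Real.rpow_nonneg hcs.le _))]
  refine mul_le_mul_of_nonneg_left ?_ (Real.rpow_nonneg hs0.le _)
  exact Real.rpow_le_rpow_of_nonpos (by linarith) (by rw [hc_def]; linarith [hs.2]) (by linarith)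

lemma integral_h_bound {H a b : ℝ} (hH1 : 0 < H) (hH2 : H < 1) (ha : 1 ≤ a) (hb : 1 ≤ b) :
    ∫ s in Ioo (0:ℝ) a, s ^ (1-2*H) * ((a+b) - s) ^ (2*H-5)
      ≤ (1 + 32/(2-2*H)) * (a ^ (1-2*H) * b ^ (2*H-4)) := by
  have hInt := h_integrable hH1 hH2 ha hb
  set c : ℝ := a + b with hc_def
  have hc : 0 < c := by rw [hc_def]; linarith
  have ha0 : (0:ℝ) < a := by linarith
  have hb0 : (0:ℝ) < b := by linarith
  have hac : a ≤ c := by rw [hc_def]; linarith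
  have hbc : b ≤ c := by rw [hc_def]; linarith
  have hi1 : IntervalIntegrable (fun s : ℝ => s ^ (1-2*H) * (c - s) ^ (2*H-5)) volume 0 (a/2) :=
    (intervalIntegrable_iff_integrableOn_Ioc_of_le (by linarith)).2
      (hInt.mono_set (Ioc_subset_Ioc_right (by linarith)))
  have hi2 : IntervalIntegrable (fun s : ℝ => s ^ (1-2*H) * (c - s) ^ (2*H-5)) volume (a/2) a :=
    (intervalIntegrable_iff_integrableOn_Ioc_of_le (by linarith)).2
      (hInt.mono_set (Ioc_subset_Ioc_left (by linarith)))
  have heq : ∫ s in Ioo (0:ℝ) a, s ^ (1-2*H) * (c - s) ^ (2*H-5)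
      = (∫ s in (0:ℝ)..(a/2), s ^ (1-2*H) * (c - s) ^ (2*H-5))
        + ∫ s in (a/2)..a, s ^ (1-2*H) * (c - s) ^ (2*H-5) := by
    rw [← integral_Ioc_eq_integral_Ioo, ← intervalIntegral.integral_of_le (by linarith : (0:ℝ) ≤ a),
      ← intervalIntegral.integral_add_adjacent_intervals hi1 hi2]
  rw [heq]
  -- piece 1
  have hp1 : (∫ s in (0:ℝ)..(a/2), s ^ (1-2*H) * (c - s) ^ (2*H-5))
      ≤ 32/(2-2*H) * (a ^ (1-2*H) * b ^ (2*H-4)) := by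
    have hcmp : IntervalIntegrable (fun s : ℝ => (c/2) ^ (2*H-5) * s ^ (1-2*H)) volume 0 (a/2) :=
      (intervalIntegral.intervalIntegrable_rpow' (by linarith)).const_mul _
    have hpt1 : ∀ s ∈ Icc (0:ℝ) (a/2), s ^ (1-2*H) * (c - s) ^ (2*H-5)
        ≤ (c/2) ^ (2*H-5) * s ^ (1-2*H) := by
      intro s hs
      have h1 : (c - s) ^ (2*H-5) ≤ (c/2) ^ (2*H-5) :=
        Real.rpow_le_rpow_of_nonpos (by linarith) (by linarith [hs.2]) (by linarith)
      calc s ^ (1-2*H) * (c - s) ^ (2*H-5) ≤ s ^ (1-2*H) * (c/2) ^ (2*H-5) :=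
            mul_le_mul_of_nonneg_left h1 (Real.rpow_nonneg hs.1 _)
        _ = (c/2) ^ (2*H-5) * s ^ (1-2*H) := mul_comm _ _
    have mono := intervalIntegral.integral_mono_on (by linarith : (0:ℝ) ≤ a/2) hi1 hcmp hpt1
    refine mono.trans ?_
    rw [intervalIntegral.integral_const_mul, integral_rpow (Or.inl (by linarith)),
      Real.zero_rpow (by intro h; nlinarith : (1-2*H)+1 ≠ 0), sub_zero,
      show (1-2*H)+1 = 2-2*H by ring]
    have e1 : (c/2) ^ (2*H-5) ≤ 32 * c ^ (2*H-5) := by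
      have ee : (c/2) ^ (2*H-5) = c ^ (2*H-5) * (2:ℝ) ^ (5-2*H) := by
        rw [div_eq_mul_inv, Real.mul_rpow hc.le (by norm_num),
          Real.inv_rpow (by norm_num), ← Real.rpow_neg (by norm_num),
          show -(2*H-5) = 5-2*H by ring]
      rw [ee]
      have h2 : (2:ℝ) ^ (5-2*H) ≤ 2 ^ (5:ℝ) := Real.rpow_le_rpow_of_exponent_le one_le_two (by linarith)
      have h25 : (2:ℝ) ^ (5:ℝ) = 32 := by
        rw [show (5:ℝ) = ((5:ℕ):ℝ) by norm_num, Real.rpow_natCast]; norm_num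
      nlinarith [Real.rpow_nonneg hc.le (2*H-5)]
    have e2 : (a/2) ^ (2-2*H) ≤ a ^ (1-2*H) * a := by
      calc (a/2) ^ (2-2*H) ≤ a ^ (2-2*H) :=
            Real.rpow_le_rpow (by positivity) (by linarith) (by linarith)
        _ = a ^ (1-2*H) * a := by
            rw [show (2-2*H) = (1-2*H)+1 by ring, Real.rpow_add_one (ne_of_gt ha0)]
    have e4 : c ^ (2*H-5) * a ≤ b ^ (2*H-4) := by
      calc c ^ (2*H-5) * a ≤ c ^ (2*H-5) * c :=
            mul_le_mul_of_nonneg_left hac (Real.rpow_nonneg hc.le _)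
        _ = c ^ (2*H-4) := by
            rw [← Real.rpow_add_one (ne_of_gt hc), show (2*H-5)+1 = 2*H-4 by ring]
        _ ≤ b ^ (2*H-4) := Real.rpow_le_rpow_of_nonpos hb0 hbc (by linarith)
    calc (c/2) ^ (2*H-5) * ((a/2) ^ (2-2*H) / (2-2*H))
        ≤ (32 * c ^ (2*H-5)) * ((a ^ (1-2*H) * a) / (2-2*H)) := by
          exact mul_le_mul e1 (div_le_div_of_nonneg_right e2 (by linarith)) (div_nonneg (by positivity) (by linarith)) (by positivity)
      _ = 32/(2-2*H) * (a ^ (1-2*H) * (c ^ (2*H-5) * a)) := by ring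
      _ ≤ 32/(2-2*H) * (a ^ (1-2*H) * b ^ (2*H-4)) := by
          have hpos : (0:ℝ) < 2-2*H := by linarith
          have := mul_le_mul_of_nonneg_left e4 (Real.rpow_nonneg ha0.le (1-2*H))
          nlinarith [Real.rpow_nonneg ha0.le (1-2*H), div_nonneg (by norm_num : (0:ℝ) ≤ 32) hpos.le]
  -- piece 2
  have hp2 : (∫ s in (a/2)..a, s ^ (1-2*H) * (c - s) ^ (2*H-5))
      ≤ a ^ (1-2*H) * b ^ (2*H-4) := by
    have hcmp : IntervalIntegrable (fun s : ℝ => 2 * a ^ (1-2*H) * (c - s) ^ (2*H-5)) volume (a/2) a := by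
      apply ContinuousOn.intervalIntegrable
      apply ContinuousOn.mul continuousOn_const
      refine (continuousOn_const.sub continuousOn_id).rpow_const fun s hs => Or.inl ?_
      rw [uIcc_of_le (by linarith : a/2 ≤ a)] at hs
      have : s ≤ a := hs.2
      have : 0 < c - s := by rw [hc_def]; linarith
      exact ne_of_gt this
    have hpt2 : ∀ s ∈ Icc (a/2) a, s ^ (1-2*H) * (c - s) ^ (2*H-5)
        ≤ 2 * a ^ (1-2*H) * (c - s) ^ (2*H-5) := by
      intro s hs
      have hs0 : 0 < s := by linarith [hs.1]
      have hcs : (0:ℝ) ≤ c - s := by rw [hc_def]; linarith [hs.2]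
      refine mul_le_mul_of_nonneg_right ?_ (Real.rpow_nonneg hcs _)
      exact rpow_double hs0 ha0 (by linarith [hs.2]) (by linarith [hs.1])
        (by rw [abs_le]; constructor <;> linarith)
    have mono := intervalIntegral.integral_mono_on (by linarith : a/2 ≤ a) hi2 hcmp hpt2
    refine mono.trans ?_
    rw [intervalIntegral.integral_const_mul,
      intervalIntegral.integral_comp_sub_left (fun t : ℝ => t ^ (2*H-5)) c]
    have hca : c - a = b := by rw [hc_def]; ring
    rw [integral_rpow (Or.inr ⟨by intro h; nlinarith,
      Set.notMem_uIcc_of_lt (by rw [hca]; linarith) (by linarith)⟩),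
      hca, show (2*H-5)+1 = 2*H-4 by ring]
    have hX0 : (0:ℝ) ≤ (c - a/2) ^ (2*H-4) := Real.rpow_nonneg (by linarith) _
    have hY0 : (0:ℝ) ≤ b ^ (2*H-4) := Real.rpow_nonneg hb0.le _
    have hrw : ((c - a/2) ^ (2*H-4) - b ^ (2*H-4)) / (2*H-4)
        = (b ^ (2*H-4) - (c - a/2) ^ (2*H-4)) / (4-2*H) := by
      rw [show (4-2*H) = -(2*H-4) by ring, ← neg_div_neg_eq]; ring_nf
    rw [hrw]
    have step1 : (b ^ (2*H-4) - (c - a/2) ^ (2*H-4)) / (4-2*H) ≤ b ^ (2*H-4) / (4-2*H) := by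
      gcongr
      · linarith
      · linarith
    have step2 : b ^ (2*H-4) / (4-2*H) ≤ b ^ (2*H-4) / 2 := by
      gcongr <;> linarith
    calc 2 * a ^ (1-2*H) * ((b ^ (2*H-4) - (c - a/2) ^ (2*H-4)) / (4-2*H))
        ≤ 2 * a ^ (1-2*H) * (b ^ (2*H-4) / 2) := by
          have h0 : (0:ℝ) ≤ 2 * a ^ (1-2*H) := by positivity
          exact mul_le_mul_of_nonneg_left (step1.trans step2) h0
      _ = a ^ (1-2*H) * b ^ (2*H-4) := by ring
  linarith


/-- Lipschitz-type bound for the residues of fBm increments: the Itô-isometry integral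
for `Y_n(u) - Y_n(v)` is bounded by `C (1 + k/n)^{2H-1} k^{2H-4} (u-v)^2`. -/
theorem residue_lipschitz_bound (H : ℝ) (hH : H ∈ Set.Ioo (0:ℝ) 1) :
    ∃ C : ℝ, 0 < C ∧
      ∀ (n k : ℕ), 0 < n → 0 < k →
        ∀ u v : ℝ, (n + k : ℝ) ≤ u → u ≤ (n + k : ℝ) + 1 →
          (n + k : ℝ) ≤ v → v ≤ (n + k : ℝ) + 1 →
          (∫ s in Set.Ioo (0:ℝ) (n:ℝ),
              ((u - s) ^ (H - 3/2) * (u / s) ^ (H - 1/2)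
                - (v - s) ^ (H - 3/2) * (v / s) ^ (H - 1/2)) ^ 2)
            ≤ C * (1 + (k:ℝ) / (n:ℝ)) ^ (2*H - 1) * (k:ℝ) ^ (2*H - 4) * (u - v) ^ 2 := by
  obtain ⟨hH1, hH2⟩ := hH
  have hC : (0:ℝ) < 81/4 * (1 + 32/(2-2*H)) := by
    have h1 : (0:ℝ) < 2-2*H := by linarith
    have h2 := div_pos (by norm_num : (0:ℝ) < 32) h1
    nlinarith
  refine ⟨81/4 * (1 + 32/(2-2*H)), hC, ?_⟩
  intro n k hn hk u v h1u h2u h1v h2v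
  set a : ℝ := (n:ℝ) with ha_def
  set b : ℝ := (k:ℝ) with hb_def
  have ha : 1 ≤ a := by rw [ha_def]; exact_mod_cast hn
  have hb : 1 ≤ b := by rw [hb_def]; exact_mod_cast hk
  have ha0 : (0:ℝ) < a := by linarith
  have hab0 : (0:ℝ) ≤ a + b := by linarith
  set K : ℝ := 81/4 * (u - v)^2 * (a+b) ^ (2*H-1) with hK_def
  have hK0 : 0 ≤ K := by
    rw [hK_def]
    exact mul_nonneg (mul_nonneg (by norm_num) (sq_nonneg _)) (Real.rpow_nonneg hab0 _)
  have hψInt : IntegrableOn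
      (fun s : ℝ => K * (s ^ (1-2*H) * ((a+b) - s) ^ (2*H-5))) (Set.Ioo 0 a) volume :=
    (((h_integrable hH1 hH2 ha hb).mono_set Set.Ioo_subset_Ioc_self)).const_mul _
  have hmono : (∫ s in Set.Ioo (0:ℝ) a,
      ((u - s) ^ (H - 3/2) * (u / s) ^ (H - 1/2)
        - (v - s) ^ (H - 3/2) * (v / s) ^ (H - 1/2)) ^ 2)
      ≤ ∫ s in Set.Ioo (0:ℝ) a, K * (s ^ (1-2*H) * ((a+b) - s) ^ (2*H-5)) := by
    refine integral_mono_of_nonneg (ae_of_all _ fun s => sq_nonneg _) hψInt ?_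
    filter_upwards [ae_restrict_mem measurableSet_Ioo] with s hs
    have := pointwise_bound hH1 hH2 ha hb h1u h2u h1v h2v hs.1 hs.2
    calc ((u - s) ^ (H - 3/2) * (u / s) ^ (H - 1/2)
        - (v - s) ^ (H - 3/2) * (v / s) ^ (H - 1/2)) ^ 2
        ≤ 81/4 * (u - v)^2 * (a+b) ^ (2*H-1) * (s ^ (1-2*H) * ((a+b) - s) ^ (2*H-5)) := this
      _ = K * (s ^ (1-2*H) * ((a+b) - s) ^ (2*H-5)) := by rw [hK_def]
  have hfrac : (1:ℝ) + b/a = (a+b)/a := by field_simp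
  have hpow : ((a+b)/a) ^ (2*H-1) = (a+b) ^ (2*H-1) * a ^ (1-2*H) := by
    rw [Real.div_rpow hab0 ha0.le, show (1-2*H) = -(2*H-1) by ring,
      Real.rpow_neg ha0.le, div_eq_mul_inv]
  calc (∫ s in Set.Ioo (0:ℝ) a,
      ((u - s) ^ (H - 3/2) * (u / s) ^ (H - 1/2)
        - (v - s) ^ (H - 3/2) * (v / s) ^ (H - 1/2)) ^ 2)
      ≤ ∫ s in Set.Ioo (0:ℝ) a, K * (s ^ (1-2*H) * ((a+b) - s) ^ (2*H-5)) := hmono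
    _ = K * ∫ s in Set.Ioo (0:ℝ) a, s ^ (1-2*H) * ((a+b) - s) ^ (2*H-5) :=
        integral_const_mul _ _
    _ ≤ K * ((1 + 32/(2-2*H)) * (a ^ (1-2*H) * b ^ (2*H-4))) :=
        mul_le_mul_of_nonneg_left (integral_h_bound hH1 hH2 ha hb) hK0
    _ = 81/4 * (1 + 32/(2-2*H)) * (1 + b/a) ^ (2*H - 1) * b ^ (2*H - 4) * (u - v) ^ 2 := by
        rw [hfrac, hpow, hK_def]; ring
end

section
/- For every H ∈ (0,1) there exists a constant C > 0 depending only on H such that for all positive integers n and k and every real u with n+k ≤ u ≤ n+k+1, one has ∫₀ⁿ (u/s)^{2H−1} (u−s)^{2H−3} ds ≤ C (1 + k/n)^{2H−1} k^{2H−2}. -/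
open MeasureTheory

/-- Variance bound for the residue process: the Itô-isometry integral for `Y_n(u)` is
bounded by `C (1 + k/n)^{2H-1} k^{2H-2}`. -/
theorem residue_variance_bound (H : ℝ) (hH : H ∈ Set.Ioo (0:ℝ) 1) :
    ∃ C : ℝ, 0 < C ∧
      ∀ (n k : ℕ), 0 < n → 0 < k →
        ∀ u : ℝ, (n + k : ℝ) ≤ u → u ≤ (n + k : ℝ) + 1 →
          (∫ s in Set.Ioo (0:ℝ) (n:ℝ), (u / s) ^ (2*H - 1) * (u - s) ^ (2*H - 3))
            ≤ C * (1 + (k:ℝ) / (n:ℝ)) ^ (2*H - 1) * (k:ℝ) ^ (2*H - 2) := by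
  obtain ⟨hH0, hH1⟩ := hH
  have h2 : 0 < 2 - 2*H := by linarith
  refine ⟨1/(2-2*H), by positivity, ?_⟩
  intro n k hn hk u hu1 hu2
  set N : ℝ := (n:ℝ) with hNdef
  set K : ℝ := (k:ℝ) with hKdef
  have hN0 : (0:ℝ) < N := by rw [hNdef]; exact_mod_cast hn
  have hK1 : (1:ℝ) ≤ K := by rw [hKdef]; exact_mod_cast hk
  have hK0 : (0:ℝ) < K := by linarith
  have hNu : N + 1 ≤ u := by linarith
  have hNltu : N < u := by linarith
  have hu0 : (0:ℝ) < u := by linarith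
  -- rewrite of the integrand
  have key : ∀ s : ℝ, 0 < s → (u/s)^(2*H-1) = u^(2*H-1) * s^(1-2*H) := by
    intro s hs
    rw [Real.div_rpow hu0.le hs.le, div_eq_mul_inv, ← Real.rpow_neg hs.le]
    congr 1; ring
  -- the antiderivative
  set F : ℝ → ℝ := fun s => u^(2*H-2)/(2-2*H) * (s^(2-2*H) * (u-s)^(2*H-2)) with hF
  have hderiv : ∀ s ∈ Set.Ioo (0:ℝ) N,
      HasDerivAt F ((u/s)^(2*H-1) * (u-s)^(2*H-3)) s := by
    rintro s ⟨hs0, hsN⟩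
    have hus : 0 < u - s := by linarith
    have d1 : HasDerivAt (fun x : ℝ => x ^ (2-2*H)) (1 * (2-2*H) * s^(2-2*H-1)) s := by
      simpa using (Real.hasDerivAt_rpow_const (x := s) (p := 2-2*H) (Or.inl hs0.ne')).congr_deriv
        (by ring)
    have d2 : HasDerivAt (fun x : ℝ => (u - x) ^ (2*H-2)) ((-1) * (2*H-2) * (u-s)^(2*H-2-1)) s :=
      ((hasDerivAt_id s).const_sub u).rpow_const (Or.inl hus.ne')
    have d3 := (d1.mul d2).const_mul (u^(2*H-2)/(2-2*H))
    convert d3 using 1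
    · rfl
    · rfl
    · rfl
    have e1 : (2:ℝ)-2*H-1 = 1-2*H := by ring
    have e2 : (2:ℝ)*H-2-1 = 2*H-3 := by ring
    have e3 : s^(2-2*H) = s^(1-2*H) * s := by
      rw [← Real.rpow_add_one hs0.ne']; congr 1; ring
    have e4 : (u-s)^(2*H-2) = (u-s)^(2*H-3) * (u-s) := by
      rw [← Real.rpow_add_one hus.ne']; congr 1; ring
    have e5 : u^(2*H-1) = u^(2*H-2) * u := by
      rw [← Real.rpow_add_one hu0.ne']; congr 1; ring
    rw [key s hs0, e1, e2, e3, e4, e5]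
    field_simp
    ring
  -- integrability
  have hle1 : ∀ s : ℝ, 0 < s → s ≤ N → (u-s)^(2*H-3) ≤ 1 := by
    intro s hs0 hsN
    exact Real.rpow_le_one_of_one_le_of_nonpos (by linarith) (by linarith)
  have hint : IntervalIntegrable (fun s => (u/s)^(2*H-1) * (u-s)^(2*H-3)) volume 0 N := by
    have hg : IntervalIntegrable (fun s : ℝ => u^(2*H-1) * s^(1-2*H)) volume 0 N :=
      (intervalIntegral.intervalIntegrable_rpow' (by linarith)).const_mul _
    apply hg.mono_fun
    · rw [Set.uIoc_of_le hN0.le]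
      apply ContinuousOn.aestronglyMeasurable _ measurableSet_Ioc
      apply ContinuousOn.mul
      · apply ContinuousOn.rpow_const (continuousOn_const.div continuousOn_id
          (fun x hx => hx.1.ne'))
        intro x hx; exact Or.inl (div_pos hu0 hx.1).ne'
      · apply ContinuousOn.rpow_const (continuousOn_const.sub continuousOn_id)
        intro x hx
        exact Or.inl (sub_pos.mpr (lt_of_le_of_lt hx.2 hNltu)).ne'
    · rw [Set.uIoc_of_le hN0.le]
      filter_upwards [ae_restrict_mem measurableSet_Ioc] with s hs
      obtain ⟨hs0, hsN⟩ := hs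
      have h1 : (0:ℝ) ≤ (u/s)^(2*H-1) * (u-s)^(2*H-3) :=
        mul_nonneg (Real.rpow_nonneg (by positivity) _)
          (Real.rpow_nonneg (by linarith [hsN]) _)
      have h2' : (0:ℝ) ≤ u^(2*H-1) * s^(1-2*H) := by positivity
      rw [Real.norm_of_nonneg h1, Real.norm_of_nonneg h2', key s hs0]
      calc u^(2*H-1) * s^(1-2*H) * (u-s)^(2*H-3)
          ≤ u^(2*H-1) * s^(1-2*H) * 1 :=
            mul_le_mul_of_nonneg_left (hle1 s hs0 hsN) (by positivity)
        _ = u^(2*H-1) * s^(1-2*H) := by ring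
  -- compute the integral
  have hF0 : Filter.Tendsto F (nhdsWithin 0 (Set.Ioi 0)) (nhds 0) := by
    have hc : ContinuousAt F 0 := by
      apply ContinuousAt.mul continuousAt_const
      exact (Real.continuousAt_rpow_const 0 (2-2*H) (Or.inr h2.le)).mul
        ((continuousAt_const.sub continuousAt_id).rpow_const (Or.inl (by simpa using hu0.ne')))
    have hF0v : F 0 = 0 := by
      simp only [hF]
      rw [Real.zero_rpow (by linarith : (2:ℝ)-2*H ≠ 0)]
      ring
    simpa [hF0v] using hc.tendsto.mono_left nhdsWithin_le_nhds
  have hFN : Filter.Tendsto F (nhdsWithin N (Set.Iio N)) (nhds (F N)) := by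
    have hc : ContinuousAt F N := by
      apply ContinuousAt.mul continuousAt_const
      exact (Real.continuousAt_rpow_const N (2-2*H) (Or.inl hN0.ne')).mul
        ((continuousAt_const.sub continuousAt_id).rpow_const
          (Or.inl (by simpa using (sub_pos.mpr hNltu).ne')))
    exact hc.tendsto.mono_left nhdsWithin_le_nhds
  have hval : (∫ s in Set.Ioo (0:ℝ) N, (u/s)^(2*H-1) * (u-s)^(2*H-3)) = F N := by
    rw [← MeasureTheory.integral_Ioc_eq_integral_Ioo,
      ← intervalIntegral.integral_of_le hN0.le]
    rw [intervalIntegral.integral_eq_sub_of_hasDerivAt_of_tendsto hN0 hderiv hint hF0 hFN]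
    ring
  rw [hval]
  -- final estimate
  have eq1 : u^(2*H-2) * N^(2-2*H) = (u/N)^(2*H-2) := by
    rw [Real.div_rpow hu0.le hN0.le, div_eq_mul_inv, ← Real.rpow_neg hN0.le]
    congr 1; ring
  have hbase : (1:ℝ) ≤ 1 + K/N := by
    have : 0 ≤ K/N := by positivity
    linarith
  have hquot : 1 + K/N ≤ u/N := by
    have h' : (N + K)/N ≤ u/N := by gcongr
    have h'' : (N + K)/N = 1 + K/N := by field_simp
    linarith [h'.trans_eq' h'']
  have b1 : (u/N)^(2*H-2) ≤ (1+K/N)^(2*H-2) :=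
    Real.rpow_le_rpow_of_nonpos (by linarith) hquot (by linarith)
  have b2 : (1+K/N)^(2*H-2) ≤ (1+K/N)^(2*H-1) :=
    Real.rpow_le_rpow_of_exponent_le hbase (by linarith)
  have b3 : (u-N)^(2*H-2) ≤ K^(2*H-2) :=
    Real.rpow_le_rpow_of_nonpos hK0 (by linarith) (by linarith)
  have hFNeq : F N = 1/(2-2*H) * ((u^(2*H-2) * N^(2-2*H)) * (u-N)^(2*H-2)) := by
    simp only [hF]; ring
  rw [hFNeq, eq1]
  have hmul : (u/N)^(2*H-2) * (u-N)^(2*H-2) ≤ (1+K/N)^(2*H-1) * K^(2*H-2) := by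
    exact mul_le_mul (b1.trans b2) b3 (Real.rpow_nonneg (by linarith) _)
      (Real.rpow_nonneg (by positivity) _)
  calc 1/(2-2*H) * ((u/N)^(2*H-2) * (u-N)^(2*H-2))
      ≤ 1/(2-2*H) * ((1+K/N)^(2*H-1) * K^(2*H-2)) :=
        mul_le_mul_of_nonneg_left hmul (by positivity)
    _ = 1/(2-2*H) * (1+K/N)^(2*H-1) * K^(2*H-2) := by ring
end

section
/- For every H ∈ (0,1) there exists a constant C > 0 depending only on H such that for all positive integers n and k and all real u, v with n+k ≤ u ≤ v ≤ n+k+1, one has ∫₀^{n/2} (u/s)^{2H−1} ( (u−s)^{H−3/2} − (v−s)^{H−3/2} )² ds ≤ C (u−v)² k^{2H−4}. -/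
open MeasureTheory

/-- Mean value theorem bound for negative powers. -/
lemma rpow_sub_rpow_abs_le {x y p : ℝ} (hx : 0 < x) (hxy : x ≤ y) (hp : p < 0) :
    |x ^ p - y ^ p| ≤ (-p) * x ^ (p - 1) * (y - x) := by
  have key : ‖(fun t : ℝ => t ^ p) y - (fun t : ℝ => t ^ p) x‖
      ≤ ((-p) * x ^ (p - 1)) * ‖y - x‖ := by
    apply Convex.norm_image_sub_le_of_norm_hasDerivWithin_le
      (f' := fun t => p * t ^ (p - 1)) (s := Set.Icc x y)
      ?_ ?_ (convex_Icc x y) (Set.left_mem_Icc.2 hxy) (Set.right_mem_Icc.2 hxy)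
    · intro t ht
      exact (Real.hasDerivAt_rpow_const
        (Or.inl (ne_of_gt (lt_of_lt_of_le hx ht.1)))).hasDerivWithinAt
    · intro t ht
      have ht0 : 0 < t := lt_of_lt_of_le hx ht.1
      rw [Real.norm_eq_abs, abs_mul, abs_of_neg hp,
        abs_of_pos (Real.rpow_pos_of_pos ht0 _)]
      have h1 : t ^ (p - 1) ≤ x ^ (p - 1) :=
        Real.rpow_le_rpow_of_nonpos hx ht.1 (by linarith)
      have hp' : 0 < -p := by linarith
      nlinarith
  simp only [Real.norm_eq_abs] at key
  rw [abs_sub_comm, abs_of_nonneg (sub_nonneg.2 hxy)] at key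
  exact key

/-- Bound on the term `I_{1a}`. -/
theorem term_I1a_bound (H : ℝ) (hH : H ∈ Set.Ioo (0:ℝ) 1) :
    ∃ C : ℝ, 0 < C ∧
      ∀ (n k : ℕ), 0 < n → 0 < k →
        ∀ u v : ℝ, (n + k : ℝ) ≤ u → u ≤ v → v ≤ (n + k : ℝ) + 1 →
          (∫ s in Set.Ioo (0:ℝ) ((n:ℝ)/2),
              (u / s) ^ (2*H - 1) * ((u - s) ^ (H - 3/2) - (v - s) ^ (H - 3/2)) ^ 2)
            ≤ C * (u - v) ^ 2 * (k:ℝ) ^ (2*H - 4) := by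
  obtain ⟨hH0, hH1⟩ := hH
  have h32 : (0:ℝ) < 3/2 - H := by linarith
  have h22 : (0:ℝ) < 2 - 2*H := by linarith
  refine ⟨2 * (3/2 - H)^2 / (2 - 2*H), by positivity, ?_⟩
  intro n k hn hk u v hu huv hv
  have hn0 : (0:ℝ) < n := by exact_mod_cast hn
  have hk1 : (1:ℝ) ≤ k := by exact_mod_cast hk
  have hu0 : (0:ℝ) < u := by
    have : (0:ℝ) < (n:ℝ) + k := by linarith
    linarith
  have hb0 : (0:ℝ) ≤ (n:ℝ)/2 := by linarith
  have hbu : (n:ℝ)/2 ≤ u := by linarith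
  set A : ℝ := 2 * (3/2 - H)^2 * (v - u)^2 * (k:ℝ) ^ (2*H - 4) * u ^ (2*H - 2) with hA
  have hA0 : 0 ≤ A := by positivity
  -- pointwise bound on the integrand
  have hpt : ∀ s ∈ Set.Ioo (0:ℝ) ((n:ℝ)/2),
      (u / s) ^ (2*H - 1) * ((u - s) ^ (H - 3/2) - (v - s) ^ (H - 3/2)) ^ 2
        ≤ A * s ^ (1 - 2*H) := by
    intro s hs
    obtain ⟨hs0, hsb⟩ := hs
    have hus : (k:ℝ) ≤ u - s := by linarith
    have hus0 : (0:ℝ) < u - s := by linarith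
    have husu : u / 2 ≤ u - s := by linarith
    have hvsu : u - s ≤ v - s := by linarith
    have h1 : (u / s) ^ (2*H - 1) = u ^ (2*H - 1) * s ^ (1 - 2*H) := by
      rw [Real.div_rpow hu0.le hs0.le, div_eq_mul_inv, ← Real.rpow_neg hs0.le]
      ring_nf
    -- MVT bound
    have h2 : |(u - s) ^ (H - 3/2) - (v - s) ^ (H - 3/2)|
        ≤ (3/2 - H) * (u - s) ^ (H - 5/2) * (v - u) := by
      have h := rpow_sub_rpow_abs_le (x := u - s) (y := v - s) (p := H - 3/2)
        hus0 hvsu (by linarith)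
      have e1 : -(H - 3/2) = 3/2 - H := by ring
      have e2 : H - 3/2 - 1 = H - 5/2 := by ring
      have e3 : v - s - (u - s) = v - u := by ring
      rw [e1, e2, e3] at h
      exact h
    have h2sq : ((u - s) ^ (H - 3/2) - (v - s) ^ (H - 3/2)) ^ 2
        ≤ (3/2 - H)^2 * (v - u)^2 * (u - s) ^ (2*H - 5) := by
      have hd : ((u - s) ^ (H - 3/2) - (v - s) ^ (H - 3/2)) ^ 2
          ≤ ((3/2 - H) * (u - s) ^ (H - 5/2) * (v - u)) ^ 2 := by
        rw [← sq_abs]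
        exact pow_le_pow_left₀ (abs_nonneg _) h2 2
      refine hd.trans (le_of_eq ?_)
      have hsq : ((u - s) ^ (H - 5/2)) ^ 2 = (u - s) ^ (2*H - 5) := by
        rw [← Real.rpow_natCast ((u - s) ^ (H - 5/2)) 2, ← Real.rpow_mul hus0.le]
        congr 1
        push_cast
        ring
      calc ((3/2 - H) * (u - s) ^ (H - 5/2) * (v - u)) ^ 2
          = (3/2 - H)^2 * (v - u)^2 * ((u - s) ^ (H - 5/2)) ^ 2 := by ring
        _ = (3/2 - H)^2 * (v - u)^2 * (u - s) ^ (2*H - 5) := by rw [hsq]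
    -- bound (u-s)^(2H-5) ≤ k^(2H-4) * (2/u)
    have h3 : (u - s) ^ (2*H - 5) ≤ (k:ℝ) ^ (2*H - 4) * (2 / u) := by
      have e : (u - s) ^ (2*H - 5) = (u - s) ^ (2*H - 4) * (u - s) ^ (-1 : ℝ) := by
        rw [← Real.rpow_add hus0]
        congr 1
        ring
      rw [e]
      have b1 : (u - s) ^ (2*H - 4) ≤ (k:ℝ) ^ (2*H - 4) :=
        Real.rpow_le_rpow_of_nonpos (by linarith) hus (by linarith)
      have b2 : (u - s) ^ (-1 : ℝ) ≤ 2 / u := by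
        rw [Real.rpow_neg_one]
        have : (u - s)⁻¹ ≤ (u / 2)⁻¹ := inv_anti₀ (by linarith) husu
        calc (u - s)⁻¹ ≤ (u / 2)⁻¹ := this
          _ = 2 / u := by rw [inv_div]
      have hpos1 : (0:ℝ) ≤ (u - s) ^ (2*H - 4) := (Real.rpow_pos_of_pos hus0 _).le
      have hpos2 : (0:ℝ) ≤ (u - s) ^ (-1:ℝ) := (Real.rpow_pos_of_pos hus0 _).le
      have hpos3 : (0:ℝ) ≤ (k:ℝ) ^ (2*H - 4) := (Real.rpow_pos_of_pos (by linarith) _).le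
      exact mul_le_mul b1 b2 hpos2 hpos3
    -- combine
    have hu3 : u ^ (2*H - 1) * (2 / u) = 2 * u ^ (2*H - 2) := by
      have hu2 : u ^ (2*H - 1) * u⁻¹ = u ^ (2*H - 2) := by
        rw [← Real.rpow_neg_one u, ← Real.rpow_add hu0]
        congr 1
        ring
      rw [div_eq_mul_inv, show u ^ (2*H - 1) * (2 * u⁻¹) = 2 * (u ^ (2*H - 1) * u⁻¹) by ring, hu2]
    have hfac : (0:ℝ) ≤ u ^ (2*H - 1) * s ^ (1 - 2*H) := by positivity
    calc (u / s) ^ (2*H - 1) * ((u - s) ^ (H - 3/2) - (v - s) ^ (H - 3/2)) ^ 2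
        = u ^ (2*H - 1) * s ^ (1 - 2*H)
            * ((u - s) ^ (H - 3/2) - (v - s) ^ (H - 3/2)) ^ 2 := by rw [h1]
      _ ≤ u ^ (2*H - 1) * s ^ (1 - 2*H)
            * ((3/2 - H)^2 * (v - u)^2 * ((k:ℝ) ^ (2*H - 4) * (2 / u))) := by
          refine mul_le_mul_of_nonneg_left ?_ hfac
          refine h2sq.trans ?_
          exact mul_le_mul_of_nonneg_left h3 (by positivity)
      _ = (u ^ (2*H - 1) * (2 / u)) * ((3/2 - H)^2 * (v - u)^2 * (k:ℝ) ^ (2*H - 4))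
            * s ^ (1 - 2*H) := by ring
      _ = A * s ^ (1 - 2*H) := by rw [hu3, hA]; ring
  -- integrability of the dominating function
  have hint_g : IntegrableOn (fun s : ℝ => A * s ^ (1 - 2*H)) (Set.Ioo (0:ℝ) ((n:ℝ)/2)) := by
    have h := (intervalIntegral.intervalIntegrable_rpow'
      (show (-1:ℝ) < 1 - 2*H by linarith) : IntervalIntegrable
        (fun s : ℝ => s ^ (1 - 2*H)) volume 0 ((n:ℝ)/2))
    have h2 := (intervalIntegrable_iff_integrableOn_Ioc_of_le hb0).1 h
    exact (h2.mono_set Set.Ioo_subset_Ioc_self).const_mul A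
  -- monotonicity of the integral
  have hmono : (∫ s in Set.Ioo (0:ℝ) ((n:ℝ)/2),
      (u / s) ^ (2*H - 1) * ((u - s) ^ (H - 3/2) - (v - s) ^ (H - 3/2)) ^ 2)
        ≤ ∫ s in Set.Ioo (0:ℝ) ((n:ℝ)/2), A * s ^ (1 - 2*H) := by
    apply integral_mono_of_nonneg
    · refine (ae_restrict_iff' measurableSet_Ioo).2 (ae_of_all _ ?_)
      intro s hs
      have h0 : (0:ℝ) ≤ (u / s) ^ (2*H - 1) :=
        Real.rpow_nonneg (div_nonneg hu0.le hs.1.le) _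
      positivity
    · exact hint_g
    · exact (ae_restrict_iff' measurableSet_Ioo).2 (ae_of_all _ hpt)
  -- compute the dominating integral
  have hcalc : (∫ s in Set.Ioo (0:ℝ) ((n:ℝ)/2), A * s ^ (1 - 2*H))
      = A * (((n:ℝ)/2) ^ (2 - 2*H) / (2 - 2*H)) := by
    rw [integral_const_mul]
    congr 1
    rw [← integral_Ioc_eq_integral_Ioo, ← intervalIntegral.integral_of_le hb0,
      integral_rpow (Or.inl (by linarith)),
      show (1 - 2*H + 1) = 2 - 2*H by ring, Real.zero_rpow (by linarith)]
    ring
  have hfin : A * (((n:ℝ)/2) ^ (2 - 2*H) / (2 - 2*H))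
      ≤ 2 * (3/2 - H)^2 / (2 - 2*H) * (u - v)^2 * (k:ℝ) ^ (2*H - 4) := by
    have hb : ((n:ℝ)/2) ^ (2 - 2*H) ≤ u ^ (2 - 2*H) :=
      Real.rpow_le_rpow hb0 hbu (by linarith)
    have step : A * (((n:ℝ)/2) ^ (2 - 2*H) / (2 - 2*H)) ≤ A * (u ^ (2 - 2*H) / (2 - 2*H)) := by
      gcongr
    refine step.trans (le_of_eq ?_)
    have huu : u ^ (2*H - 2) * u ^ (2 - 2*H) = 1 := by
      rw [← Real.rpow_add hu0]
      norm_num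
    rw [hA]
    have hvu : (v - u)^2 = (u - v)^2 := by ring
    calc 2 * (3/2 - H)^2 * (v - u)^2 * (k:ℝ) ^ (2*H - 4) * u ^ (2*H - 2)
          * (u ^ (2 - 2*H) / (2 - 2*H))
        = 2 * (3/2 - H)^2 / (2 - 2*H) * (v - u)^2 * (k:ℝ) ^ (2*H - 4)
            * (u ^ (2*H - 2) * u ^ (2 - 2*H)) := by ring
      _ = 2 * (3/2 - H)^2 / (2 - 2*H) * (u - v)^2 * (k:ℝ) ^ (2*H - 4) := by
          rw [huu, hvu]; ring
  calc (∫ s in Set.Ioo (0:ℝ) ((n:ℝ)/2),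
      (u / s) ^ (2*H - 1) * ((u - s) ^ (H - 3/2) - (v - s) ^ (H - 3/2)) ^ 2)
      ≤ ∫ s in Set.Ioo (0:ℝ) ((n:ℝ)/2), A * s ^ (1 - 2*H) := hmono
    _ = A * (((n:ℝ)/2) ^ (2 - 2*H) / (2 - 2*H)) := hcalc
    _ ≤ 2 * (3/2 - H)^2 / (2 - 2*H) * (u - v)^2 * (k:ℝ) ^ (2*H - 4) := hfin
end

section
/- For every H ∈ (0,1) there exists a constant C > 0 depending only on H such that for all positive integers n and k and all real u, v with n+k ≤ u ≤ v ≤ n+k+1, one has ∫_{n/2}^{n} (u/s)^{2H−1} ( (u−s)^{H−3/2} − (v−s)^{H−3/2} )² ds ≤ C (1 + k/n)^{2H−1} k^{2H−4} (u−v)². -/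
open MeasureTheory

lemma sq_rpow_diff_le {q a b : ℝ} (hq : q < 0) (ha : 0 < a) (hab : a ≤ b) :
    (a ^ q - b ^ q) ^ 2 ≤ q ^ 2 * a ^ (2 * q - 2) * (b - a) ^ 2 := by
  rcases eq_or_lt_of_le hab with rfl | h
  · simp
  have hb : 0 < b := ha.trans h
  have key0 : 0 ≤ a ^ q - b ^ q :=
    sub_nonneg.mpr (Real.rpow_le_rpow_of_nonpos ha hab hq.le)
  obtain ⟨c, hc, hc'⟩ := exists_hasDerivAt_eq_slope (fun x => x ^ q)
    (fun x => q * x ^ (q - 1)) h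
    (ContinuousOn.rpow_const continuousOn_id
      (fun x hx => Or.inl (ne_of_gt (lt_of_lt_of_le ha hx.1))))
    (fun x hx => Real.hasDerivAt_rpow_const (Or.inl (ne_of_gt (ha.trans hx.1))))
  have hba : (0:ℝ) < b - a := by linarith
  have hc0 : 0 < c := ha.trans hc.1
  have heq : a ^ q - b ^ q = (-q) * c ^ (q - 1) * (b - a) := by
    have h3 : b ^ q - a ^ q = q * c ^ (q - 1) * (b - a) :=
      (div_eq_iff hba.ne').mp hc'.symm
    linarith [h3]
  have hcle : c ^ (q - 1) ≤ a ^ (q - 1) :=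
    Real.rpow_le_rpow_of_nonpos ha hc.1.le (by linarith)
  have key : a ^ q - b ^ q ≤ (-q) * a ^ (q - 1) * (b - a) := by
    rw [heq]
    have h1 : (-q) * c ^ (q - 1) ≤ (-q) * a ^ (q - 1) :=
      mul_le_mul_of_nonneg_left hcle (by linarith)
    exact mul_le_mul_of_nonneg_right h1 hba.le
  calc (a ^ q - b ^ q) ^ 2 ≤ ((-q) * a ^ (q - 1) * (b - a)) ^ 2 :=
        pow_le_pow_left₀ key0 key 2
    _ = q ^ 2 * (a ^ (q - 1)) ^ (2:ℕ) * (b - a) ^ 2 := by ring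
    _ = q ^ 2 * a ^ (2 * q - 2) * (b - a) ^ 2 := by
        have hx : a ^ (2 * q - 2) = (a ^ (q - 1)) ^ (2:ℕ) := by
          rw [← Real.rpow_natCast (a ^ (q - 1)) 2, ← Real.rpow_mul ha.le]
          congr 1
          push_cast
          ring
        rw [hx]

/-- Bound on the term `I_{1b}`. -/
theorem term_I1b_bound (H : ℝ) (hH : H ∈ Set.Ioo (0:ℝ) 1) :
    ∃ C : ℝ, 0 < C ∧
      ∀ (n k : ℕ), 0 < n → 0 < k →
        ∀ u v : ℝ, (n + k : ℝ) ≤ u → u ≤ v → v ≤ (n + k : ℝ) + 1 →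
          (∫ s in Set.Ioo ((n:ℝ)/2) (n:ℝ),
              (u / s) ^ (2*H - 1) * ((u - s) ^ (H - 3/2) - (v - s) ^ (H - 3/2)) ^ 2)
            ≤ C * (1 + (k:ℝ) / (n:ℝ)) ^ (2*H - 1) * (k:ℝ) ^ (2*H - 4) * (u - v) ^ 2 := by
  obtain ⟨hH0, hH1⟩ := hH
  have hq : H - 3/2 < 0 := by linarith
  have h32 : (0:ℝ) < 3/2 - H := by linarith
  have h42 : (0:ℝ) < 4 - 2*H := by linarith
  refine ⟨4 * (3/2 - H)^2 / (4 - 2*H), by positivity, ?_⟩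
  intro n k hn hk u v hu huv hv
  have hn' : (0:ℝ) < n := by exact_mod_cast hn
  have hk' : (1:ℝ) ≤ k := by exact_mod_cast hk
  set t : ℝ := 1 + (k:ℝ)/(n:ℝ) with ht_def
  have ht : 0 < t := by positivity
  have ht1 : 1 ≤ t := by
    rw [ht_def]
    have : 0 ≤ (k:ℝ)/(n:ℝ) := by positivity
    linarith
  have htn : t * n = n + k := by rw [ht_def, add_mul, div_mul_cancel₀ _ hn'.ne', one_mul]
  have hu0 : (0:ℝ) < u := lt_of_lt_of_le (by positivity) hu
  have hun : (n:ℝ) + k ≤ u := hu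
  have hukn : (k:ℝ) ≤ u - n := by linarith
  have huk0 : (0:ℝ) < u - n := by linarith
  set A : ℝ := 4 * t ^ (2*H - 1) * ((3/2 - H)^2 * (v - u)^2) with hA_def
  have hA0 : 0 ≤ A := by positivity
  -- pointwise bound
  have hpt : ∀ s ∈ Set.Ioo ((n:ℝ)/2) (n:ℝ),
      (u / s) ^ (2*H - 1) * ((u - s) ^ (H - 3/2) - (v - s) ^ (H - 3/2)) ^ 2
        ≤ A * (u - s) ^ (2*H - 5) := by
    intro s hs
    have hs0 : 0 < s := lt_of_le_of_lt (by positivity) hs.1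
    have hsn : s < n := hs.2
    have hus : (0:ℝ) < u - s := by linarith
    have hvs : u - s ≤ v - s := by linarith
    -- base bound
    have hB : (u / s) ^ (2*H - 1) ≤ 4 * t ^ (2*H - 1) := by
      rcases le_or_gt 0 (2*H - 1) with hsgn | hsgn
      · have hus4 : u / s ≤ 4 * t := by
          rw [div_le_iff₀ hs0]
          have h1 : 4 * t * ((n:ℝ)/2) ≤ 4 * t * s :=
            mul_le_mul_of_nonneg_left hs.1.le (by positivity)
          have h2 : 4 * t * ((n:ℝ)/2) = 2 * (t * n) := by ring
          rw [h2, htn] at h1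
          have : u ≤ 2 * ((n:ℝ) + k) := by linarith
          linarith
        calc (u / s) ^ (2*H - 1) ≤ (4 * t) ^ (2*H - 1) :=
              Real.rpow_le_rpow (by positivity) hus4 hsgn
          _ = (4:ℝ) ^ (2*H - 1) * t ^ (2*H - 1) := Real.mul_rpow (by norm_num) ht.le
          _ ≤ (4:ℝ) ^ (1:ℝ) * t ^ (2*H - 1) := by
              have : (4:ℝ) ^ (2*H - 1) ≤ (4:ℝ) ^ (1:ℝ) :=
                Real.rpow_le_rpow_of_exponent_le (by norm_num) (by linarith)
              exact mul_le_mul_of_nonneg_right this (by positivity)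
          _ = 4 * t ^ (2*H - 1) := by rw [Real.rpow_one]
      · have htus : t ≤ u / s := by
          rw [le_div_iff₀ hs0]
          have : t * s ≤ t * n := mul_le_mul_of_nonneg_left hsn.le ht.le
          rw [htn] at this
          linarith
        have : (u / s) ^ (2*H - 1) ≤ t ^ (2*H - 1) :=
          Real.rpow_le_rpow_of_nonpos ht htus hsgn.le
        have htp : 0 < t ^ (2*H - 1) := Real.rpow_pos_of_pos ht _
        linarith
    -- difference bound
    have hD : ((u - s) ^ (H - 3/2) - (v - s) ^ (H - 3/2)) ^ 2
        ≤ (3/2 - H)^2 * (u - s) ^ (2*H - 5) * (v - u)^2 := by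
      have := sq_rpow_diff_le hq hus hvs
      have he : 2 * (H - 3/2) - 2 = 2*H - 5 := by ring
      rw [he] at this
      have h1 : (H - 3/2)^2 = (3/2 - H)^2 := by ring
      have h2 : (v - s - (u - s))^2 = (v - u)^2 := by ring
      rw [h1, h2] at this
      exact this
    calc (u / s) ^ (2*H - 1) * ((u - s) ^ (H - 3/2) - (v - s) ^ (H - 3/2)) ^ 2
        ≤ (4 * t ^ (2*H - 1)) * ((3/2 - H)^2 * (u - s) ^ (2*H - 5) * (v - u)^2) :=
          mul_le_mul hB hD (sq_nonneg _) (by positivity)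
      _ = A * (u - s) ^ (2*H - 5) := by rw [hA_def]; ring
  -- integrability
  have hIcc : Set.Icc ((n:ℝ)/2) (n:ℝ) ⊆ {s : ℝ | 0 < s} := by
    intro s hs
    exact lt_of_lt_of_le (by positivity) hs.1
  have hf_int : IntegrableOn
      (fun s => (u / s) ^ (2*H - 1) * ((u - s) ^ (H - 3/2) - (v - s) ^ (H - 3/2)) ^ 2)
      (Set.Ioo ((n:ℝ)/2) (n:ℝ)) := by
    apply IntegrableOn.mono_set _ Set.Ioo_subset_Icc_self
    apply ContinuousOn.integrableOn_compact isCompact_Icc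
    have c1 : ContinuousOn (fun s : ℝ => (u / s) ^ (2*H - 1)) (Set.Icc ((n:ℝ)/2) (n:ℝ)) := by
      apply ContinuousOn.rpow_const
      · exact continuousOn_const.div continuousOn_id (fun x hx => ne_of_gt (hIcc hx))
      · exact fun x hx => Or.inl (div_ne_zero (ne_of_gt hu0) (ne_of_gt (hIcc hx)))
    have c2 : ContinuousOn (fun s : ℝ => (u - s) ^ (H - 3/2)) (Set.Icc ((n:ℝ)/2) (n:ℝ)) := by
      apply ContinuousOn.rpow_const
      · exact continuousOn_const.sub continuousOn_id
      · intro x hx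
        refine Or.inl ?_
        have hx2 : x ≤ (n:ℝ) := hx.2
        have : (0:ℝ) < u - x := by linarith
        exact ne_of_gt this
    have c3 : ContinuousOn (fun s : ℝ => (v - s) ^ (H - 3/2)) (Set.Icc ((n:ℝ)/2) (n:ℝ)) := by
      apply ContinuousOn.rpow_const
      · exact continuousOn_const.sub continuousOn_id
      · intro x hx
        refine Or.inl ?_
        have hx2 : x ≤ (n:ℝ) := hx.2
        have : (0:ℝ) < v - x := by linarith
        exact ne_of_gt this
    exact c1.mul ((c2.sub c3).pow 2)
  have hg_int : IntegrableOn (fun s => A * (u - s) ^ (2*H - 5))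
      (Set.Ioo ((n:ℝ)/2) (n:ℝ)) := by
    apply IntegrableOn.mono_set _ Set.Ioo_subset_Icc_self
    apply ContinuousOn.integrableOn_compact isCompact_Icc
    apply ContinuousOn.mul continuousOn_const
    apply ContinuousOn.rpow_const (continuousOn_const.sub continuousOn_id)
    intro x hx
    refine Or.inl ?_
    have hx2 : x ≤ (n:ℝ) := hx.2
    have : (0:ℝ) < u - x := by linarith
    exact ne_of_gt this
  -- monotonicity of the integral
  have step1 : (∫ s in Set.Ioo ((n:ℝ)/2) (n:ℝ),
        (u / s) ^ (2*H - 1) * ((u - s) ^ (H - 3/2) - (v - s) ^ (H - 3/2)) ^ 2)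
      ≤ ∫ s in Set.Ioo ((n:ℝ)/2) (n:ℝ), A * (u - s) ^ (2*H - 5) :=
    setIntegral_mono_on hf_int hg_int measurableSet_Ioo hpt
  -- compute the dominating integral
  have step2 : (∫ s in Set.Ioo ((n:ℝ)/2) (n:ℝ), (u - s) ^ (2*H - 5))
      = ((u - (n:ℝ)/2) ^ (2*H - 4) - (u - (n:ℝ)) ^ (2*H - 4)) / (2*H - 4) := by
    rw [← integral_Ioc_eq_integral_Ioo,
      ← intervalIntegral.integral_of_le (by linarith : (n:ℝ)/2 ≤ (n:ℝ)),
      intervalIntegral.integral_comp_sub_left (fun x : ℝ => x ^ (2*H - 5)) u,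
      integral_rpow]
    · norm_num
      rw [show 2*H - 5 + 1 = 2*H - 4 by ring]
    · refine Or.inr ⟨ne_of_lt (by linarith), ?_⟩
      apply Set.notMem_uIcc_of_lt
      · linarith
      · linarith
  have step3 : ((u - (n:ℝ)/2) ^ (2*H - 4) - (u - (n:ℝ)) ^ (2*H - 4)) / (2*H - 4)
      ≤ (k:ℝ) ^ (2*H - 4) / (4 - 2*H) := by
    have h1 : (u - (n:ℝ)) ^ (2*H - 4) ≤ (k:ℝ) ^ (2*H - 4) :=
      Real.rpow_le_rpow_of_nonpos (by linarith) hukn (by linarith)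
    have h2 : 0 ≤ (u - (n:ℝ)/2) ^ (2*H - 4) :=
      Real.rpow_nonneg (by linarith) _
    have hne : 2*H - 4 ≠ 0 := by linarith
    have hne2 : (4:ℝ) - 2*H ≠ 0 := ne_of_gt h42
    have e1 : ((u - (n:ℝ)/2) ^ (2*H - 4) - (u - (n:ℝ)) ^ (2*H - 4)) / (2*H - 4)
        = ((u - (n:ℝ)) ^ (2*H - 4) - (u - (n:ℝ)/2) ^ (2*H - 4)) / (4 - 2*H) := by
      field_simp
      ring
    rw [e1, div_le_div_iff₀ h42 h42]
    nlinarith [h1, h2]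
  have hInn : 0 ≤ (k:ℝ) ^ (2*H - 4) / (4 - 2*H) := by positivity
  calc (∫ s in Set.Ioo ((n:ℝ)/2) (n:ℝ),
        (u / s) ^ (2*H - 1) * ((u - s) ^ (H - 3/2) - (v - s) ^ (H - 3/2)) ^ 2)
      ≤ ∫ s in Set.Ioo ((n:ℝ)/2) (n:ℝ), A * (u - s) ^ (2*H - 5) := step1
    _ = A * ∫ s in Set.Ioo ((n:ℝ)/2) (n:ℝ), (u - s) ^ (2*H - 5) := integral_const_mul _ _
    _ ≤ A * ((k:ℝ) ^ (2*H - 4) / (4 - 2*H)) := by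
        rw [step2]
        exact mul_le_mul_of_nonneg_left step3 hA0
    _ = 4 * (3/2 - H)^2 / (4 - 2*H) * t ^ (2*H - 1) * (k:ℝ) ^ (2*H - 4) * (u - v) ^ 2 := by
        rw [hA_def]; ring
end

section
/- For every H ∈ (0,1) there exists a constant C > 0 depending only on H such that for all positive integers n and k and all real u, v with n+k ≤ u ≤ v ≤ n+k+1, one has ∫₀^{n/2} (v−s)^{2H−3} ( (u/s)^{H−1/2} − (v/s)^{H−1/2} )² ds ≤ C (u−v)² k^{2H−4}. -/
open MeasureTheory

/-- Mean value estimate: for `a ≤ 1` and `0 < u ≤ v`,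
`(u^a - v^a)^2 ≤ a^2 * u^(2a-2) * (v-u)^2`. -/
lemma diff_rpow_sq_le {a u v : ℝ} (ha : a ≤ 1) (hu : 0 < u) (huv : u ≤ v) :
    (u ^ a - v ^ a) ^ 2 ≤ a ^ 2 * u ^ (2*a - 2) * (v - u) ^ 2 := by
  rcases eq_or_lt_of_le huv with rfl | h
  · have : (u ^ a - u ^ a) ^ 2 = 0 := by ring
    rw [this]
    positivity
  · obtain ⟨c, hc, hderiv⟩ :=
      exists_hasDerivAt_eq_slope (fun x => x ^ a) (fun x => a * x ^ (a - 1)) h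
        (fun x hx => (Real.continuousAt_rpow_const x a
          (Or.inl (ne_of_gt (lt_of_lt_of_le hu hx.1)))).continuousWithinAt)
        (fun x hx => Real.hasDerivAt_rpow_const (Or.inl (ne_of_gt (hu.trans hx.1))))
    have hc0 : 0 < c := hu.trans hc.1
    have heq : v ^ a - u ^ a = a * c ^ (a - 1) * (v - u) := by
      rw [hderiv]
      field_simp
    have hsq : (u ^ a - v ^ a) ^ 2 = a ^ 2 * (c ^ (a-1)) ^ 2 * (v - u) ^ 2 := by
      have : (u ^ a - v ^ a) ^ 2 = (v ^ a - u ^ a) ^ 2 := by ring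
      rw [this, heq]; ring
    have hcsq : (c ^ (a-1)) ^ 2 = c ^ (2*a - 2) := by
      rw [sq, ← Real.rpow_add hc0]
      ring_nf
    have hbase : c ^ (2*a - 2) ≤ u ^ (2*a - 2) :=
      Real.rpow_le_rpow_of_nonpos hu hc.1.le (by linarith)
    rw [hsq, hcsq]
    have h1 : a ^ 2 * c ^ (2*a - 2) ≤ a ^ 2 * u ^ (2*a - 2) :=
      mul_le_mul_of_nonneg_left hbase (sq_nonneg a)
    exact mul_le_mul_of_nonneg_right h1 (sq_nonneg _)

/-- Bound on the term `I_{2a}`. -/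
theorem term_I2a_bound (H : ℝ) (hH : H ∈ Set.Ioo (0:ℝ) 1) :
    ∃ C : ℝ, 0 < C ∧
      ∀ (n k : ℕ), 0 < n → 0 < k →
        ∀ u v : ℝ, (n + k : ℝ) ≤ u → u ≤ v → v ≤ (n + k : ℝ) + 1 →
          (∫ s in Set.Ioo (0:ℝ) ((n:ℝ)/2),
              (v - s) ^ (2*H - 3) * ((u / s) ^ (H - 1/2) - (v / s) ^ (H - 1/2)) ^ 2)
            ≤ C * (u - v) ^ 2 * (k:ℝ) ^ (2*H - 4) := by
  obtain ⟨hH0, hH1⟩ := hH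
  refine ⟨((H - 1/2)^2 + 1) / (2 - 2*H), div_pos (by positivity) (by linarith), ?_⟩
  intro n k hn hk u v hu huv hv
  have hn1 : (1:ℝ) ≤ n := by exact_mod_cast hn
  have hk1 : (1:ℝ) ≤ k := by exact_mod_cast hk
  set c : ℝ := (n:ℝ)/2 with hc_def
  have hc0 : 0 < c := by positivity
  have hcu : c < u := by
    have : c ≤ (n:ℝ) := by rw [hc_def]; linarith
    linarith
  have hu0 : 0 < u := hc0.trans hcu
  have hv0 : 0 < v := hu0.trans_le huv
  have hvc0 : 0 < v - c := by linarith
  have hcvc : c ≤ v - c := by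
    have : (n:ℝ) + k ≤ v := le_trans hu huv
    rw [hc_def]; linarith [hk1]
  have hkvc : (k:ℝ) ≤ v - c := by
    have : (n:ℝ) + k ≤ v := le_trans hu huv
    rw [hc_def]; linarith [hn1]
  have hku : (k:ℝ) ≤ u := by linarith [hn1]
  have hk0 : (0:ℝ) < k := by linarith
  set D : ℝ := ((H - 1/2)^2 + 1) * (v - u)^2 * ((v - c) ^ (2*H - 3) * u ^ (2*H - 3))
    with hD_def
  have hD0 : 0 ≤ D := by
    have h1 : (0:ℝ) ≤ (v - c) ^ (2*H - 3) := Real.rpow_nonneg hvc0.le _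
    have h2 : (0:ℝ) ≤ u ^ (2*H - 3) := Real.rpow_nonneg hu0.le _
    positivity
  -- pointwise bound
  have hpt : ∀ s ∈ Set.Ioo (0:ℝ) c,
      (v - s) ^ (2*H - 3) * ((u / s) ^ (H - 1/2) - (v / s) ^ (H - 1/2)) ^ 2
        ≤ D * s ^ (1 - 2*H) := by
    intro s hs
    obtain ⟨hs0, hsc⟩ := hs
    have hvs0 : 0 < v - s := by linarith
    have hrw : ((u / s) ^ (H - 1/2) - (v / s) ^ (H - 1/2)) ^ 2
        = (u ^ (H - 1/2) - v ^ (H - 1/2)) ^ 2 * s ^ (1 - 2*H) := by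
      rw [Real.div_rpow hu0.le hs0.le, Real.div_rpow hv0.le hs0.le,
        div_sub_div_same, div_pow, div_eq_mul_inv]
      congr 1
      rw [sq, ← Real.rpow_add hs0, ← Real.rpow_neg hs0.le]
      congr 1
      ring
    have hdiff : (u ^ (H - 1/2) - v ^ (H - 1/2)) ^ 2
        ≤ ((H - 1/2)^2 + 1) * u ^ (2*H - 3) * (v - u) ^ 2 := by
      have h0 := diff_rpow_sq_le (a := H - 1/2) (by linarith) hu0 huv
      have he : 2*(H - 1/2) - 2 = 2*H - 3 := by ring
      rw [he] at h0
      nlinarith [Real.rpow_nonneg hu0.le (2*H - 3), sq_nonneg (v - u)]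
    have hvsb : (v - s) ^ (2*H - 3) ≤ (v - c) ^ (2*H - 3) :=
      Real.rpow_le_rpow_of_nonpos hvc0 (by linarith) (by linarith)
    calc (v - s) ^ (2*H - 3) * ((u / s) ^ (H - 1/2) - (v / s) ^ (H - 1/2)) ^ 2
        = (v - s) ^ (2*H - 3) * ((u ^ (H - 1/2) - v ^ (H - 1/2)) ^ 2 * s ^ (1 - 2*H)) := by
          rw [hrw]
      _ ≤ (v - c) ^ (2*H - 3)
            * ((((H - 1/2)^2 + 1) * u ^ (2*H - 3) * (v - u) ^ 2) * s ^ (1 - 2*H)) := by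
          apply mul_le_mul hvsb
          · exact mul_le_mul_of_nonneg_right hdiff (Real.rpow_nonneg hs0.le _)
          · positivity
          · exact Real.rpow_nonneg hvc0.le _
      _ = D * s ^ (1 - 2*H) := by rw [hD_def]; ring
  -- integrability of the dominating function
  have hexp : (-1:ℝ) < 1 - 2*H := by linarith
  have hg_int : IntegrableOn (fun s => D * s ^ (1 - 2*H)) (Set.Ioo (0:ℝ) c) := by
    have h1 : IntegrableOn (fun s : ℝ => s ^ (1 - 2*H)) (Set.Ioo (0:ℝ) c) := by
      have := (intervalIntegrable_iff_integrableOn_Ioo_of_le hc0.le).mp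
        (intervalIntegral.intervalIntegrable_rpow' hexp (a := 0) (b := c))
      exact this
    exact h1.const_mul D
  -- integrability of the integrand
  have hf_meas : AEStronglyMeasurable
      (fun s => (v - s) ^ (2*H - 3) * ((u / s) ^ (H - 1/2) - (v / s) ^ (H - 1/2)) ^ 2)
      (volume.restrict (Set.Ioo (0:ℝ) c)) := by
    apply Measurable.aestronglyMeasurable
    exact (((measurable_const.sub measurable_id).pow measurable_const).mul
      ((((measurable_const.div measurable_id).pow measurable_const).sub
        ((measurable_const.div measurable_id).pow measurable_const)).pow measurable_const))
  have hf_nonneg : ∀ s ∈ Set.Ioo (0:ℝ) c,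
      0 ≤ (v - s) ^ (2*H - 3) * ((u / s) ^ (H - 1/2) - (v / s) ^ (H - 1/2)) ^ 2 := by
    intro s hs
    have : (0:ℝ) ≤ v - s := by linarith [hs.2]
    exact mul_nonneg (Real.rpow_nonneg this _) (sq_nonneg _)
  have hf_int : IntegrableOn
      (fun s => (v - s) ^ (2*H - 3) * ((u / s) ^ (H - 1/2) - (v / s) ^ (H - 1/2)) ^ 2)
      (Set.Ioo (0:ℝ) c) := by
    refine hg_int.mono' hf_meas ?_
    refine (ae_restrict_iff' measurableSet_Ioo).mpr (ae_of_all _ fun s hs => ?_)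
    rw [Real.norm_eq_abs, abs_of_nonneg (hf_nonneg s hs)]
    exact hpt s hs
  -- compare integrals
  have hmono : (∫ s in Set.Ioo (0:ℝ) c,
      (v - s) ^ (2*H - 3) * ((u / s) ^ (H - 1/2) - (v / s) ^ (H - 1/2)) ^ 2)
      ≤ ∫ s in Set.Ioo (0:ℝ) c, D * s ^ (1 - 2*H) :=
    setIntegral_mono_on hf_int hg_int measurableSet_Ioo hpt
  -- compute the dominating integral
  have hval : (∫ s in Set.Ioo (0:ℝ) c, D * s ^ (1 - 2*H))
      = D * (c ^ (2 - 2*H) / (2 - 2*H)) := by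
    rw [← integral_Ioc_eq_integral_Ioo, ← intervalIntegral.integral_of_le hc0.le,
      intervalIntegral.integral_const_mul, integral_rpow (Or.inl hexp)]
    rw [Real.zero_rpow (by linarith : (1 - 2*H) + 1 ≠ 0)]
    norm_num
    left
    ring_nf
  -- key arithmetic bound
  have hkey : (v - c) ^ (2*H - 3) * u ^ (2*H - 3) * c ^ (2 - 2*H) ≤ (k:ℝ) ^ (2*H - 4) := by
    have h1 : (v - c) ^ (2*H - 3) = (v - c) ^ (2*H - 2) * (v - c) ^ (-1:ℝ) := by
      rw [← Real.rpow_add hvc0]; congr 1; ring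
    have h2 : (v - c) ^ (2*H - 2) ≤ c ^ (2*H - 2) :=
      Real.rpow_le_rpow_of_nonpos hc0 hcvc (by linarith)
    have h3 : (v - c) ^ (-1:ℝ) ≤ (k:ℝ) ^ (-1:ℝ) := by
      rw [Real.rpow_neg_one, Real.rpow_neg_one]
      exact inv_anti₀ hk0 hkvc
    have h4 : u ^ (2*H - 3) ≤ (k:ℝ) ^ (2*H - 3) :=
      Real.rpow_le_rpow_of_nonpos hk0 hku (by linarith)
    have hcc : c ^ (2*H - 2) * c ^ (2 - 2*H) = 1 := by
      rw [← Real.rpow_add hc0]; norm_num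
    have hkk : (k:ℝ) ^ (-1:ℝ) * (k:ℝ) ^ (2*H - 3) = (k:ℝ) ^ (2*H - 4) := by
      rw [← Real.rpow_add hk0]; ring_nf
    calc (v - c) ^ (2*H - 3) * u ^ (2*H - 3) * c ^ (2 - 2*H)
        = ((v - c) ^ (2*H - 2) * c ^ (2 - 2*H)) * ((v - c) ^ (-1:ℝ) * u ^ (2*H - 3)) := by
          rw [h1]; ring
      _ ≤ (c ^ (2*H - 2) * c ^ (2 - 2*H)) * ((k:ℝ) ^ (-1:ℝ) * (k:ℝ) ^ (2*H - 3)) := by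
          apply mul_le_mul
          · exact mul_le_mul_of_nonneg_right h2 (Real.rpow_nonneg hc0.le _)
          · exact mul_le_mul h3 h4 (Real.rpow_nonneg hu0.le _) (Real.rpow_nonneg hk0.le _)
          · exact mul_nonneg (Real.rpow_nonneg hvc0.le _) (Real.rpow_nonneg hu0.le _)
          · exact mul_nonneg (Real.rpow_nonneg hc0.le _) (Real.rpow_nonneg hc0.le _)
      _ = (k:ℝ) ^ (2*H - 4) := by rw [hcc, hkk, one_mul]
  -- finish
  have hfinal : D * (c ^ (2 - 2*H) / (2 - 2*H))
      ≤ ((H - 1/2)^2 + 1) / (2 - 2*H) * (u - v) ^ 2 * (k:ℝ) ^ (2*H - 4) := by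
    have hsq : (v - u)^2 = (u - v)^2 := by ring
    have h2H : (0:ℝ) < 2 - 2*H := by linarith
    rw [hD_def, hsq]
    have expand : ((H - 1/2)^2 + 1) * (u - v)^2 * ((v - c) ^ (2*H - 3) * u ^ (2*H - 3))
        * (c ^ (2 - 2*H) / (2 - 2*H))
        = (((H - 1/2)^2 + 1) / (2 - 2*H) * (u - v)^2)
          * ((v - c) ^ (2*H - 3) * u ^ (2*H - 3) * c ^ (2 - 2*H)) := by
      field_simp
    calc ((H - 1/2)^2 + 1) * (u - v)^2 * ((v - c) ^ (2*H - 3) * u ^ (2*H - 3))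
        * (c ^ (2 - 2*H) / (2 - 2*H))
        = (((H - 1/2)^2 + 1) / (2 - 2*H) * (u - v)^2)
          * ((v - c) ^ (2*H - 3) * u ^ (2*H - 3) * c ^ (2 - 2*H)) := expand
      _ ≤ (((H - 1/2)^2 + 1) / (2 - 2*H) * (u - v)^2) * (k:ℝ) ^ (2*H - 4) :=
          mul_le_mul_of_nonneg_left hkey
            (mul_nonneg (le_of_lt (div_pos (by positivity) h2H)) (sq_nonneg _))
      _ = ((H - 1/2)^2 + 1) / (2 - 2*H) * (u - v) ^ 2 * (k:ℝ) ^ (2*H - 4) := by ring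
  calc (∫ s in Set.Ioo (0:ℝ) c,
      (v - s) ^ (2*H - 3) * ((u / s) ^ (H - 1/2) - (v / s) ^ (H - 1/2)) ^ 2)
      ≤ ∫ s in Set.Ioo (0:ℝ) c, D * s ^ (1 - 2*H) := hmono
    _ = D * (c ^ (2 - 2*H) / (2 - 2*H)) := hval
    _ ≤ ((H - 1/2)^2 + 1) / (2 - 2*H) * (u - v) ^ 2 * (k:ℝ) ^ (2*H - 4) := hfinal
end

section
/- For every H ∈ (0,1) there exists a constant C > 0 depending only on H such that for all positive integers n and k and all real u, v with n+k ≤ u ≤ v ≤ n+k+1, one has ∫_{n/2}^{n} (v−s)^{2H−3} ( (u/s)^{H−1/2} − (v/s)^{H−1/2} )² ds ≤ C (1 + k/n)^{2H−1} k^{2H−4} (u−v)². -/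
open MeasureTheory

/-- Mean value bound for `x ↦ x ^ p` on `[a, b] ⊆ [m, ∞)`, `m ≥ 1`, `p ≤ 1`. -/
lemma rpow_sub_rpow_abs_le_s6 {p m a b : ℝ} (hp : p ≤ 1) (hm : 1 ≤ m) (hma : m ≤ a)
    (hab : a ≤ b) : |a ^ p - b ^ p| ≤ |p| * m ^ (p - 1) * (b - a) := by
  have hm0 : (0:ℝ) < m := lt_of_lt_of_le one_pos hm
  have key : ∀ x ∈ Set.Icc a b,
      HasDerivWithinAt (fun y : ℝ => y ^ p) (p * x ^ (p - 1)) (Set.Icc a b) x := by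
    intro x hx
    have hx0 : x ≠ 0 :=
      ne_of_gt (lt_of_lt_of_le hm0 (le_trans hma hx.1))
    exact (Real.hasDerivAt_rpow_const (Or.inl hx0)).hasDerivWithinAt
  have bound : ∀ x ∈ Set.Icc a b, ‖p * x ^ (p - 1)‖ ≤ |p| * m ^ (p - 1) := by
    intro x hx
    have hx0 : (0:ℝ) < x := lt_of_lt_of_le hm0 (le_trans hma hx.1)
    have h1 : x ^ (p - 1) ≤ m ^ (p - 1) :=
      Real.rpow_le_rpow_of_nonpos hm0 (le_trans hma hx.1) (by linarith)
    have h2 : (0:ℝ) ≤ x ^ (p - 1) := (Real.rpow_pos_of_pos hx0 _).le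
    rw [norm_mul, Real.norm_eq_abs, Real.norm_eq_abs, abs_of_nonneg h2]
    exact mul_le_mul_of_nonneg_left h1 (abs_nonneg p)
  have := (convex_Icc a b).norm_image_sub_le_of_norm_hasDerivWithin_le key bound
    (Set.left_mem_Icc.2 hab) (Set.right_mem_Icc.2 hab)
  rw [Real.norm_eq_abs, Real.norm_eq_abs, abs_sub_comm,
    abs_of_nonneg (show (0:ℝ) ≤ b - a from by linarith)] at this
  exact this

set_option maxHeartbeats 1000000 in
/-- Bound on the term `I_{2b}`. -/
theorem term_I2b_bound (H : ℝ) (hH : H ∈ Set.Ioo (0:ℝ) 1) :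
    ∃ C : ℝ, 0 < C ∧
      ∀ (n k : ℕ), 0 < n → 0 < k →
        ∀ u v : ℝ, (n + k : ℝ) ≤ u → u ≤ v → v ≤ (n + k : ℝ) + 1 →
          (∫ s in Set.Ioo ((n:ℝ)/2) (n:ℝ),
              (v - s) ^ (2*H - 3) * ((u / s) ^ (H - 1/2) - (v / s) ^ (H - 1/2)) ^ 2)
            ≤ C * (1 + (k:ℝ) / (n:ℝ)) ^ (2*H - 1) * (k:ℝ) ^ (2*H - 4) * (u - v) ^ 2 := by
  obtain ⟨hH0, hH1⟩ := hH
  set p : ℝ := H - 1/2 with hp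
  refine ⟨2 * p ^ 2 + 1, by positivity, ?_⟩
  intro n k hn hk u v hu huv hv
  have hn0 : (0:ℝ) < n := by exact_mod_cast hn
  have hk0 : (0:ℝ) < k := by exact_mod_cast hk
  set m : ℝ := 1 + (k:ℝ) / (n:ℝ) with hmdef
  have hkn : (0:ℝ) ≤ (k:ℝ) / n := by positivity
  have hm1 : (1:ℝ) ≤ m := by rw [hmdef]; linarith
  have hm0 : (0:ℝ) < m := lt_of_lt_of_le one_pos hm1
  set D : ℝ := (k:ℝ) ^ (2*H - 3) * (p ^ 2 * m ^ (2*H - 3) * (v - u) ^ 2 * (2 / n) ^ 2)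
    with hD
  have hbound : ∀ s ∈ Set.Ioo ((n:ℝ)/2) (n:ℝ),
      ‖(v - s) ^ (2*H - 3) * ((u / s) ^ (H - 1/2) - (v / s) ^ (H - 1/2)) ^ 2‖ ≤ D := by
    intro s hs
    simp only [← hp]
    obtain ⟨hs1, hs2⟩ := hs
    have hs0 : (0:ℝ) < s := lt_trans (by positivity) hs1
    have hvs : (k:ℝ) ≤ v - s := by linarith
    have h1 : (v - s) ^ (2*H - 3) ≤ (k:ℝ) ^ (2*H - 3) :=
      Real.rpow_le_rpow_of_nonpos hk0 hvs (by linarith)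
    have h1' : (0:ℝ) ≤ (v - s) ^ (2*H - 3) :=
      (Real.rpow_pos_of_pos (by linarith) _).le
    -- bound the squared difference via the mean value theorem
    have hma : m ≤ u / s := by
      have hmeq : m = ((n:ℝ) + k) / n := by rw [hmdef]; field_simp
      rw [hmeq]
      exact div_le_div₀ (by linarith) hu hs0 hs2.le
    have hab : u / s ≤ v / s := by gcongr
    have hmvt := rpow_sub_rpow_abs_le_s6 (p := p) (by rw [hp]; linarith) hm1 hma hab
    have hslope : v / s - u / s ≤ (v - u) * (2 / n) := by
      rw [div_sub_div_same]
      have h2n : (v - u) / s ≤ (v - u) / ((n:ℝ)/2) :=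
        div_le_div_of_nonneg_left (by linarith) (by positivity) hs1.le
      calc (v - u) / s ≤ (v - u) / ((n:ℝ)/2) := h2n
        _ = (v - u) * (2 / n) := by field_simp
    have hmp : (0:ℝ) ≤ |p| * m ^ (p - 1) := by positivity
    have habs : |(u/s) ^ p - (v/s) ^ p| ≤ |p| * m ^ (p - 1) * ((v - u) * (2/n)) :=
      le_trans hmvt (mul_le_mul_of_nonneg_left hslope hmp)
    have hsq : ((u/s) ^ p - (v/s) ^ p) ^ 2
        ≤ p ^ 2 * m ^ (2*H - 3) * (v - u) ^ 2 * (2/n) ^ 2 := by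
      have h0 : (0:ℝ) ≤ |(u/s) ^ p - (v/s) ^ p| := abs_nonneg _
      have := mul_self_le_mul_self h0 habs
      have hmm : m ^ (p - 1) * m ^ (p - 1) = m ^ (2*H - 3) := by
        rw [← Real.rpow_add hm0]; congr 1; rw [hp]; ring
      calc ((u/s) ^ p - (v/s) ^ p) ^ 2
          = |(u/s) ^ p - (v/s) ^ p| * |(u/s) ^ p - (v/s) ^ p| := by
            rw [pow_two, ← abs_mul_abs_self]
        _ ≤ (|p| * m ^ (p - 1) * ((v - u) * (2/n))) *
              (|p| * m ^ (p - 1) * ((v - u) * (2/n))) := this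
        _ = (|p| * |p|) * (m ^ (p - 1) * m ^ (p - 1)) * (v - u) ^ 2 * (2/n) ^ 2 := by
            ring
        _ = p ^ 2 * m ^ (2*H - 3) * (v - u) ^ 2 * (2/n) ^ 2 := by
            rw [abs_mul_abs_self, hmm]; ring
    have hsq0 : (0:ℝ) ≤ ((u/s) ^ p - (v/s) ^ p) ^ 2 := sq_nonneg _
    have hgnon : (0:ℝ) ≤ (v - s) ^ (2*H - 3) * ((u/s) ^ p - (v/s) ^ p) ^ 2 :=
      mul_nonneg h1' hsq0
    rw [Real.norm_eq_abs, abs_of_nonneg hgnon, hD]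
    exact mul_le_mul h1 hsq hsq0 (Real.rpow_pos_of_pos hk0 _).le
  have hfin : volume (Set.Ioo ((n:ℝ)/2) (n:ℝ)) < ⊤ := measure_Ioo_lt_top
  have hI := norm_setIntegral_le_of_norm_le_const (μ := volume) hfin hbound
  have hvol : (volume (Set.Ioo ((n:ℝ)/2) (n:ℝ))).toReal = (n:ℝ)/2 := by
    rw [Real.volume_Ioo, ENNReal.toReal_ofReal (by linarith)]
    ring
  rw [Measure.real, hvol] at hI
  have hle : (∫ s in Set.Ioo ((n:ℝ)/2) (n:ℝ),
      (v - s) ^ (2*H - 3) * ((u / s) ^ (H - 1/2) - (v / s) ^ (H - 1/2)) ^ 2)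
      ≤ D * ((n:ℝ)/2) :=
    le_trans (le_abs_self _) (by rw [← Real.norm_eq_abs]; exact hI)
  refine hle.trans ?_
  -- arithmetic: D * (n/2) ≤ (2p²+1) m^{2H-1} k^{2H-4} (u-v)²
  have hk1 : (k:ℝ) ^ (2*H - 3) = (k:ℝ) ^ (2*H - 4) * k := by
    rw [show (2*H - 3 : ℝ) = (2*H - 4) + 1 by ring, Real.rpow_add_one hk0.ne']
  have hm3 : m ^ (2*H - 3) = m ^ (2*H - 1) * (m ^ 2)⁻¹ := by
    rw [show (2*H - 3 : ℝ) = (2*H - 1) + (-2) by ring, Real.rpow_add hm0,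
      Real.rpow_neg hm0.le, Real.rpow_two]
  have hKpos : (0:ℝ) < (k:ℝ) ^ (2*H - 4) := Real.rpow_pos_of_pos hk0 _
  have hMpos : (0:ℝ) < m ^ (2*H - 1) := Real.rpow_pos_of_pos hm0 _
  have huv2 : (u - v) ^ 2 = (v - u) ^ 2 := by ring
  rw [hD, hk1, hm3, huv2]
  have heq : ((k:ℝ) ^ (2*H - 4) * k) *
      (p ^ 2 * (m ^ (2*H - 1) * (m ^ 2)⁻¹) * (v - u) ^ 2 * (2 / n) ^ 2) * ((n:ℝ)/2)
      = 2 * p ^ 2 * ((k:ℝ) / n / m ^ 2) *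
        (m ^ (2*H - 1) * ((k:ℝ) ^ (2*H - 4) * (v - u) ^ 2)) := by
    field_simp
  rw [heq]
  have hratio : (k:ℝ) / n / m ^ 2 ≤ 1 := by
    rw [div_le_one (by positivity)]
    rw [hmdef]
    nlinarith
  have h2p : 2 * p ^ 2 * ((k:ℝ) / n / m ^ 2) ≤ 2 * p ^ 2 + 1 := by
    nlinarith [sq_nonneg p, hkn, sq_nonneg m]
  calc 2 * p ^ 2 * ((k:ℝ) / n / m ^ 2) *
        (m ^ (2*H - 1) * ((k:ℝ) ^ (2*H - 4) * (v - u) ^ 2))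
      ≤ (2 * p ^ 2 + 1) * (m ^ (2*H - 1) * ((k:ℝ) ^ (2*H - 4) * (v - u) ^ 2)) := by
        apply mul_le_mul_of_nonneg_right h2p (by positivity)
    _ = (2 * p ^ 2 + 1) * m ^ (2*H - 1) * (k:ℝ) ^ (2*H - 4) * (v - u) ^ 2 := by ring
end

section
/- For every H ∈ (0,1) there exists a constant C > 0 depending only on H such that for all positive integers n and k and every real u with n+k ≤ u ≤ n+k+1, one has ∫₀^{n/2} (u/s)^{2H−1} (u−s)^{2H−3} ds ≤ C (1 + k/n)^{2H−2} k^{2H−2}. -/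
open MeasureTheory

/-- Bound on the term `J₁`. -/
theorem term_J1_bound (H : ℝ) (hH : H ∈ Set.Ioo (0:ℝ) 1) :
    ∃ C : ℝ, 0 < C ∧
      ∀ (n k : ℕ), 0 < n → 0 < k →
        ∀ u : ℝ, (n + k : ℝ) ≤ u → u ≤ (n + k : ℝ) + 1 →
          (∫ s in Set.Ioo (0:ℝ) ((n:ℝ)/2), (u / s) ^ (2*H - 1) * (u - s) ^ (2*H - 3))
            ≤ C * (1 + (k:ℝ) / (n:ℝ)) ^ (2*H - 2) * (k:ℝ) ^ (2*H - 2) := by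
  obtain ⟨hH0, hH1⟩ := hH
  have h22 : (0:ℝ) < 2 - 2*H := by linarith
  refine ⟨8 / (2 - 2*H), div_pos (by norm_num) h22, ?_⟩
  intro n k hn hk u hu1 hu2
  have hn' : (0:ℝ) < n := by exact_mod_cast hn
  have hk' : (0:ℝ) < k := by exact_mod_cast hk
  have hu : (0:ℝ) < u := lt_of_lt_of_le (by positivity) hu1
  have hku : (k:ℝ) ≤ u := le_trans (by linarith) hu1
  set b : ℝ := (n:ℝ)/2 with hb
  have hb0 : 0 < b := by positivity
  have hbu : b ≤ u/2 := by
    have : (n:ℝ) ≤ u := le_trans (by linarith) hu1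
    rw [hb]; linarith
  set f : ℝ → ℝ := fun s => (u / s) ^ (2*H - 1) * (u - s) ^ (2*H - 3) with hf
  set g : ℝ → ℝ := fun s => (u/2) ^ (2*H - 3) * (u ^ (2*H - 1) * s ^ (1 - 2*H)) with hg
  -- integrability of s ^ (1-2H) on Ioo 0 b
  have hr : (-1:ℝ) < 1 - 2*H := by linarith
  have hint0 : IntegrableOn (fun s : ℝ => s ^ (1 - 2*H)) (Set.Ioo 0 b) := by
    have h1 := intervalIntegral.intervalIntegrable_rpow' (a := 0) (b := b) hr
    rw [intervalIntegrable_iff_integrableOn_Ioc_of_le hb0.le] at h1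
    exact h1.mono_set Set.Ioo_subset_Ioc_self
  have hgint : IntegrableOn g (Set.Ioo 0 b) := by
    exact (hint0.const_mul (u ^ (2*H - 1))).const_mul ((u/2) ^ (2*H - 3))
  -- pointwise bound
  have hfg : ∀ s ∈ Set.Ioo (0:ℝ) b, f s ≤ g s := by
    intro s hs
    obtain ⟨hs0, hsb⟩ := hs
    have hsu : s < u/2 := lt_of_lt_of_le hsb hbu
    have heq : (u / s) ^ (2*H - 1) = u ^ (2*H - 1) * s ^ (1 - 2*H) := by
      rw [Real.div_rpow hu.le hs0.le, div_eq_mul_inv, ← Real.rpow_neg hs0.le]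
      ring_nf
    have hbase : (u - s) ^ (2*H - 3) ≤ (u/2) ^ (2*H - 3) :=
      Real.rpow_le_rpow_of_nonpos (by linarith) (by linarith) (by linarith)
    calc f s = u ^ (2*H - 1) * s ^ (1 - 2*H) * (u - s) ^ (2*H - 3) := by
            rw [hf]; simp only; rw [heq]
      _ ≤ u ^ (2*H - 1) * s ^ (1 - 2*H) * (u/2) ^ (2*H - 3) := by
            apply mul_le_mul_of_nonneg_left hbase; positivity
      _ = g s := by rw [hg]; ring
  have hfnn : ∀ s ∈ Set.Ioo (0:ℝ) b, 0 ≤ f s := by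
    intro s hs
    obtain ⟨hs0, hsb⟩ := hs
    have hsu : s < u/2 := lt_of_lt_of_le hsb hbu
    have : 0 < u - s := by linarith
    positivity
  have hfmeas : AEStronglyMeasurable f (volume.restrict (Set.Ioo 0 b)) := by
    apply ContinuousOn.aestronglyMeasurable _ measurableSet_Ioo
    intro s hs
    obtain ⟨hs0, hsb⟩ := hs
    have hsu : s < u/2 := lt_of_lt_of_le hsb hbu
    apply ContinuousAt.continuousWithinAt
    apply ContinuousAt.mul
    · exact (continuousAt_const.div continuousAt_id hs0.ne').rpow_const
        (Or.inl (div_ne_zero hu.ne' hs0.ne'))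
    · exact (continuousAt_const.sub continuousAt_id).rpow_const
        (Or.inl (by simp only [Pi.sub_apply, id]; intro h; nlinarith))
  have hfint : IntegrableOn f (Set.Ioo 0 b) := by
    apply Integrable.mono' hgint hfmeas
    filter_upwards [ae_restrict_mem measurableSet_Ioo] with s hs
    rw [Real.norm_eq_abs, abs_of_nonneg (hfnn s hs)]
    exact hfg s hs
  have hmono : (∫ s in Set.Ioo (0:ℝ) b, f s) ≤ ∫ s in Set.Ioo (0:ℝ) b, g s :=
    setIntegral_mono_on hfint hgint measurableSet_Ioo hfg
  -- compute integral of g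
  have hval : (∫ s in Set.Ioo (0:ℝ) b, (fun s : ℝ => s ^ (1 - 2*H)) s)
      = b ^ (2 - 2*H) / (2 - 2*H) := by
    rw [← MeasureTheory.integral_Ioc_eq_integral_Ioo,
      ← intervalIntegral.integral_of_le hb0.le, integral_rpow (Or.inl hr)]
    rw [Real.zero_rpow (by linarith)]
    ring_nf
  have hgval : (∫ s in Set.Ioo (0:ℝ) b, g s)
      = (u/2) ^ (2*H - 3) * (u ^ (2*H - 1) * (b ^ (2 - 2*H) / (2 - 2*H))) := by
    rw [hg]
    simp only
    rw [MeasureTheory.integral_const_mul, MeasureTheory.integral_const_mul, hval]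
  -- arithmetic bounds
  have e1 : (u/2) ^ (2*H - 3) = u ^ (2*H - 3) * 2 ^ (3 - 2*H) := by
    rw [Real.div_rpow hu.le (by norm_num), div_eq_mul_inv, ← Real.rpow_neg (by norm_num)]
    ring_nf
  have e2 : b ^ (2 - 2*H) = (n:ℝ) ^ (2 - 2*H) * 2 ^ (2*H - 2) := by
    rw [hb, Real.div_rpow hn'.le (by norm_num), div_eq_mul_inv, ← Real.rpow_neg (by norm_num)]
    ring_nf
  have h8 : (2:ℝ) ^ (3 - 2*H) ≤ 8 := by
    calc (2:ℝ) ^ (3 - 2*H) ≤ 2 ^ (3:ℝ) :=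
          Real.rpow_le_rpow_of_exponent_le (by norm_num) (by linarith)
      _ = 8 := by
          rw [show (3:ℝ) = ((3:ℕ):ℝ) by norm_num, Real.rpow_natCast]; norm_num
  have h1le : (2:ℝ) ^ (2*H - 2) ≤ 1 :=
    Real.rpow_le_one_of_one_le_of_nonpos (by norm_num) (by linarith)
  have hkey : u ^ (2*H - 3) * u ^ (2*H - 1) ≤ ((n:ℝ) + k) ^ (2*H - 2) * (k:ℝ) ^ (2*H - 2) := by
    rw [← Real.rpow_add hu]
    have : (2*H - 3) + (2*H - 1) = (2*H - 2) + (2*H - 2) := by ring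
    rw [this, Real.rpow_add hu]
    apply mul_le_mul
    · exact Real.rpow_le_rpow_of_nonpos (by positivity) hu1 (by linarith)
    · exact Real.rpow_le_rpow_of_nonpos hk' hku (by linarith)
    · positivity
    · positivity
  have hrhs : (1 + (k:ℝ) / (n:ℝ)) ^ (2*H - 2)
      = ((n:ℝ) + k) ^ (2*H - 2) * (n:ℝ) ^ (2 - 2*H) := by
    have : 1 + (k:ℝ) / (n:ℝ) = ((n:ℝ) + k) / n := by field_simp
    rw [this, Real.div_rpow (by positivity) hn'.le, div_eq_mul_inv,
      ← Real.rpow_neg hn'.le]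
    ring_nf
  -- final chain
  calc (∫ s in Set.Ioo (0:ℝ) b, f s) ≤ ∫ s in Set.Ioo (0:ℝ) b, g s := hmono
    _ = (u/2) ^ (2*H - 3) * (u ^ (2*H - 1) * (b ^ (2 - 2*H) / (2 - 2*H))) := hgval
    _ = (u ^ (2*H - 3) * u ^ (2*H - 1)) * ((n:ℝ) ^ (2 - 2*H) / (2 - 2*H))
        * (2 ^ (3 - 2*H) * 2 ^ (2*H - 2)) := by rw [e1, e2]; ring
    _ ≤ (((n:ℝ) + k) ^ (2*H - 2) * (k:ℝ) ^ (2*H - 2)) * ((n:ℝ) ^ (2 - 2*H) / (2 - 2*H))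
        * (8 * 1) := by
          apply mul_le_mul
          · exact mul_le_mul_of_nonneg_right hkey (by positivity)
          · exact mul_le_mul h8 h1le (by positivity) (by norm_num)
          · positivity
          · positivity
    _ = 8 / (2 - 2*H) * (1 + (k:ℝ) / (n:ℝ)) ^ (2*H - 2) * (k:ℝ) ^ (2*H - 2) := by
          rw [hrhs]; ring
end

section
/- For every H ∈ (0,1) there exists a constant C > 0 depending only on H such that for all positive integers n and k and every real u with n+k ≤ u ≤ n+k+1, one has ∫_{n/2}^{n} (u/s)^{2H−1} (u−s)^{2H−3} ds ≤ C (1 + k/n)^{2H−1} k^{2H−2}. -/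
open MeasureTheory

/-- Bound on the term `J₂`. -/
theorem term_J2_bound (H : ℝ) (hH : H ∈ Set.Ioo (0:ℝ) 1) :
    ∃ C : ℝ, 0 < C ∧
      ∀ (n k : ℕ), 0 < n → 0 < k →
        ∀ u : ℝ, (n + k : ℝ) ≤ u → u ≤ (n + k : ℝ) + 1 →
          (∫ s in Set.Ioo ((n:ℝ)/2) (n:ℝ), (u / s) ^ (2*H - 1) * (u - s) ^ (2*H - 3))
            ≤ C * (1 + (k:ℝ) / (n:ℝ)) ^ (2*H - 1) * (k:ℝ) ^ (2*H - 2) := by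
  obtain ⟨hH0, hH1⟩ := hH
  have h22H : (0:ℝ) < 2 - 2*H := by linarith
  refine ⟨4 / (2 - 2*H), by positivity, ?_⟩
  intro n k hn hk u hu1 hu2
  have hn1 : (1:ℝ) ≤ n := by exact_mod_cast hn
  have hk1 : (1:ℝ) ≤ k := by exact_mod_cast hk
  have hn0 : (0:ℝ) < n := by linarith
  have hk0 : (0:ℝ) < k := by linarith
  set ρ : ℝ := 1 + (k:ℝ) / (n:ℝ) with hρdef
  have hρ1 : (1:ℝ) ≤ ρ := by
    have : 0 < (k:ℝ)/n := by positivity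
    simp [hρdef]; linarith
  have hρ0 : (0:ℝ) < ρ := by linarith
  have hukn : (n:ℝ) + k ≤ u := hu1
  have hun : (n:ℝ) + 1 ≤ u := by linarith
  have hu0 : (0:ℝ) < u := by linarith
  -- the base bound: for s ∈ Ioo (n/2) n, ρ ≤ u/s ≤ 4ρ
  set a : ℝ := 2*H - 1 with ha
  set K : ℝ := 4 * ρ ^ a with hKdef
  have hρa0 : (0:ℝ) < ρ ^ a := Real.rpow_pos_of_pos hρ0 a
  have hK0 : (0:ℝ) < K := by positivity
  have hbase : ∀ s ∈ Set.Ioo ((n:ℝ)/2) (n:ℝ), (u / s) ^ a ≤ K := by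
    intro s hs
    obtain ⟨hs1, hs2⟩ := hs
    have hs0 : (0:ℝ) < s := by linarith
    have hlow : ρ ≤ u / s := by
      rw [le_div_iff₀ hs0]
      have : ρ * s ≤ ρ * n := by
        apply mul_le_mul_of_nonneg_left hs2.le hρ0.le
      calc ρ * s ≤ ρ * n := this
        _ = (n:ℝ) + k := by rw [hρdef]; field_simp
        _ ≤ u := hu1
    have hhigh : u / s ≤ 4 * ρ := by
      rw [div_le_iff₀ hs0]
      have h4ρ : 4 * ρ * s ≥ 4 * ρ * (n/2) := by
        apply mul_le_mul_of_nonneg_left hs1.le (by positivity)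
      have : 4 * ρ * ((n:ℝ)/2) = 2 * ((n:ℝ) + k) := by
        rw [hρdef]; field_simp; ring
      have h2 : u ≤ 2 * ((n:ℝ) + k) := by linarith
      linarith [h4ρ, this ▸ h4ρ]
    have hus0 : (0:ℝ) < u / s := by positivity
    rcases le_or_gt 0 a with hapos | haneg
    · calc (u/s) ^ a ≤ (4*ρ) ^ a := Real.rpow_le_rpow hus0.le hhigh hapos
        _ = 4 ^ a * ρ ^ a := Real.mul_rpow (by norm_num) hρ0.le
        _ ≤ 4 * ρ ^ a := by
            apply mul_le_mul_of_nonneg_right _ hρa0.le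
            calc (4:ℝ) ^ a ≤ (4:ℝ) ^ (1:ℝ) :=
                  Real.rpow_le_rpow_of_exponent_le (by norm_num) (by simp [ha]; linarith)
              _ = 4 := Real.rpow_one 4
    · calc (u/s) ^ a ≤ ρ ^ a := Real.rpow_le_rpow_of_nonpos hρ0 hlow haneg.le
        _ ≤ 4 * ρ ^ a := by linarith
  -- integrability of the majorant
  have hIcc : Set.Ioo ((n:ℝ)/2) (n:ℝ) ⊆ Set.Icc ((n:ℝ)/2) (n:ℝ) := Set.Ioo_subset_Icc_self
  have hgcont : ContinuousOn (fun s : ℝ => K * (u - s) ^ (2*H - 3)) (Set.Icc ((n:ℝ)/2) (n:ℝ)) := by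
    apply ContinuousOn.mul continuousOn_const
    apply ContinuousOn.rpow_const (by fun_prop)
    intro s hs
    left
    have : s ≤ (n:ℝ) := hs.2
    have : (0:ℝ) < u - s := by linarith
    linarith
  have hgint : IntegrableOn (fun s : ℝ => K * (u - s) ^ (2*H - 3))
      (Set.Ioo ((n:ℝ)/2) (n:ℝ)) := by
    exact (hgcont.integrableOn_Icc).mono_set hIcc
  -- pointwise comparison
  have hmono : (∫ s in Set.Ioo ((n:ℝ)/2) (n:ℝ), (u / s) ^ a * (u - s) ^ (2*H - 3))
      ≤ ∫ s in Set.Ioo ((n:ℝ)/2) (n:ℝ), K * (u - s) ^ (2*H - 3) := by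
    apply integral_mono_of_nonneg
    · apply ae_restrict_of_forall_mem measurableSet_Ioo
      intro s hs
      have hs0 : (0:ℝ) < s := by linarith [hs.1]
      have hus : (0:ℝ) < u - s := by linarith [hs.2]
      positivity
    · exact hgint
    · apply ae_restrict_of_forall_mem measurableSet_Ioo
      intro s hs
      have hus : (0:ℝ) < u - s := by linarith [hs.2]
      have := hbase s hs
      exact mul_le_mul_of_nonneg_right this (Real.rpow_nonneg hus.le _)
  -- compute the integral of the majorant
  have hAB : (0:ℝ) < u - n := by linarith
  have hA' : (k:ℝ) ≤ u - n := by linarith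
  have hB : (0:ℝ) < u - n/2 := by linarith
  have hle : (n:ℝ)/2 ≤ n := by linarith
  have hIval : (∫ s in Set.Ioo ((n:ℝ)/2) (n:ℝ), (u - s) ^ (2*H - 3))
      = ((u - n/2) ^ (2*H - 2) - (u - n) ^ (2*H - 2)) / (2*H - 2) := by
    rw [← integral_Ioc_eq_integral_Ioo, ← intervalIntegral.integral_of_le hle]
    have := intervalIntegral.integral_comp_sub_left (a := (n:ℝ)/2) (b := (n:ℝ))
      (fun t : ℝ => t ^ (2*H - 3)) u
    rw [this]
    rw [integral_rpow]
    · rw [show 2*H - 3 + 1 = 2*H - 2 by ring]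
    · right
      constructor
      · intro h; rw [sub_eq_iff_eq_add] at h; norm_num at h; linarith
      · intro h
        rw [Set.mem_uIcc] at h
        rcases h with ⟨h1, _⟩ | ⟨_, h2⟩ <;> linarith
  have hIbound : ((u - n/2) ^ (2*H - 2) - (u - n) ^ (2*H - 2)) / (2*H - 2)
      ≤ (k:ℝ) ^ (2*H - 2) / (2 - 2*H) := by
    have h1 : ((u - n/2) ^ (2*H - 2) - (u - n) ^ (2*H - 2)) / (2*H - 2)
        = ((u - n) ^ (2*H - 2) - (u - n/2) ^ (2*H - 2)) / (2 - 2*H) := by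
      rw [div_eq_div_iff (by linarith) (by linarith)]; ring
    rw [h1]
    have hnum : (u - n) ^ (2*H - 2) - (u - n/2) ^ (2*H - 2) ≤ (k:ℝ) ^ (2*H - 2) := by
      have h2 : (u - n) ^ (2*H - 2) ≤ (k:ℝ) ^ (2*H - 2) :=
        Real.rpow_le_rpow_of_nonpos hk0 hA' (by linarith)
      have h3 : (0:ℝ) ≤ (u - n/2) ^ (2*H - 2) := Real.rpow_nonneg hB.le _
      linarith
    gcongr
  -- assemble
  have hKI : (∫ s in Set.Ioo ((n:ℝ)/2) (n:ℝ), K * (u - s) ^ (2*H - 3))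
      = K * ∫ s in Set.Ioo ((n:ℝ)/2) (n:ℝ), (u - s) ^ (2*H - 3) :=
    integral_const_mul K _
  calc (∫ s in Set.Ioo ((n:ℝ)/2) (n:ℝ), (u / s) ^ (2*H-1) * (u - s) ^ (2*H - 3))
      ≤ ∫ s in Set.Ioo ((n:ℝ)/2) (n:ℝ), K * (u - s) ^ (2*H - 3) := hmono
    _ = K * (((u - n/2) ^ (2*H - 2) - (u - n) ^ (2*H - 2)) / (2*H - 2)) := by
        rw [hKI, hIval]
    _ ≤ K * ((k:ℝ) ^ (2*H - 2) / (2 - 2*H)) :=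
        mul_le_mul_of_nonneg_left hIbound hK0.le
    _ = 4 / (2 - 2*H) * ρ ^ (2*H - 1) * (k:ℝ) ^ (2*H - 2) := by
        rw [hKdef, ha]; ring
end

section
/- Let m ≥ 1 be a natural number. The number of sequences x : {1,…,2m} → {−1,+1} such that the partial sums S_k = x_1 + ⋯ + x_k satisfy S_k ≠ 0 for all 1 ≤ k ≤ 2m−1 and S_{2m} = 0 equals (1/(2m−1)) · binom(2m, m). -/
open DyckStep Finset List

namespace FirstReturnAux

def stepInt : DyckStep → ℤ := fun s => match s with | U => 1 | D => -1

lemma stepInt_dichotomy (s : DyckStep) : stepInt s = 1 ∨ stepInt s = -1 := by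
  cases s <;> simp [stepInt]

lemma stepInt_inj : Function.Injective stepInt := by
  intro a b h; cases a <;> cases b <;> simp_all [stepInt]

lemma sum_map_stepInt (w : List DyckStep) :
    (w.map stepInt).sum = (w.count U : ℤ) - (w.count D : ℤ) := by
  induction w with
  | nil => simp
  | cons a t ih => cases a <;> simp [stepInt, ih, count_cons] <;> ring

lemma sum_take_succ (l : List ℤ) (k : ℕ) :
    (l.take (k + 1)).sum = (l.take k).sum + l.getD k 0 := by
  induction l generalizing k with
  | nil => simp [List.getD]
  | cons a t ih =>
    cases k with
    | zero => simp [List.getD]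
    | succ k =>
      simp only [take_succ_cons, List.sum_cons, ih k, List.getD_cons_succ]
      ring

lemma sum_take_eq_range (l : List ℤ) (k : ℕ) :
    (l.take k).sum = ∑ i ∈ Finset.range k, l.getD i 0 := by
  induction k with
  | zero => simp
  | succ k ih => rw [sum_take_succ, Finset.sum_range_succ, ih]

lemma sum_ite_eq_take {N : ℕ} (x : Fin N → ℤ) (k : ℕ) :
    (∑ i : Fin N, if (i : ℕ) < k then x i else 0) = ((List.ofFn x).take k).sum := by
  have hg : ∀ i : ℕ, N ≤ i → (List.ofFn x).getD i 0 = 0 := fun i hi =>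
    List.getD_eq_default _ _ (by simpa using hi)
  have h1 : (∑ i : Fin N, if (i : ℕ) < k then x i else 0)
      = ∑ i ∈ Finset.range N, if i < k then (List.ofFn x).getD i 0 else 0 := by
    rw [Finset.sum_range]
    refine Finset.sum_congr rfl fun i _ => ?_
    have : (List.ofFn x).getD (i : ℕ) 0 = x i := by
      rw [List.getD_eq_getElem _ _ (by simpa using i.2), List.getElem_ofFn]
    simp [this]
  rw [h1, sum_take_eq_range, ← Finset.sum_filter]
  have h2 : (Finset.range N).filter (· < k) = Finset.range (min k N) := by
    ext i; simp; omega
  rw [h2]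
  refine Finset.sum_subset (by intro i hi; simp at hi ⊢; omega) fun i hi hni => ?_
  simp only [Finset.mem_range] at hi hni
  exact hg i (by omega)

lemma ofFn_getD {α β : Type*} (l : List α) (n : ℕ) (h : l.length = n) (f : α → β) (d : α) :
    List.ofFn (fun i : Fin n => f (l.getD (i : ℕ) d)) = l.map f := by
  apply List.ext_getElem (by simp [h])
  intro i h1 h2
  have hi : i < l.length := by simp at h1; omega
  simp only [List.getElem_ofFn, List.getElem_map]
  rw [List.getD_eq_getElem _ _ hi]

lemma getD_ofFn {α : Type*} {n : ℕ} (f : Fin n → α) (d : α) (i : Fin n) :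
    (List.ofFn f).getD (i : ℕ) d = f i := by
  rw [List.getD_eq_getElem _ _ (by simpa using i.2), List.getElem_ofFn]

/-- The target set. -/
def S (m : ℕ) : Set (Fin (2 * m) → ℤ) :=
  {x | (∀ i, x i = 1 ∨ x i = -1) ∧
    (∀ k : ℕ, 1 ≤ k → k ≤ 2 * m - 1 →
      (∑ i : Fin (2 * m), if (i : ℕ) < k then x i else 0) ≠ 0) ∧
    (∑ i : Fin (2 * m), x i) = 0}

/-- The bijection from signed Dyck words to walks. -/
def F (m : ℕ) (bq : Bool × {q : DyckWord // q.semilength = m - 1}) : Fin (2 * m) → ℤ :=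
  fun i => (if bq.1 then 1 else -1) * stepInt ((bq.2.1.nest).toList.getD (i : ℕ) U)

lemma len_nest {m : ℕ} (hm : 1 ≤ m) (q : DyckWord) (hq : q.semilength = m - 1) :
    q.nest.toList.length = 2 * m := by
  rw [← DyckWord.two_mul_semilength_eq_length, DyckWord.semilength_nest, hq]; omega

lemma F_inj {m : ℕ} (hm : 1 ≤ m) : Function.Injective (F m) := by
  rintro ⟨b, q, hq⟩ ⟨b', q', hq'⟩ h
  have h02 : (0 : ℕ) < 2 * m := by omega
  have hlen : q.nest.toList.length = 2 * m := len_nest hm q hq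
  have hlen' : q'.nest.toList.length = 2 * m := len_nest hm q' hq'
  have hhead : ∀ (r : DyckWord), r.nest.toList.getD 0 U = U := by
    intro r
    have hne : r.nest.toList ≠ [] := DyckWord.toList_ne_nil.mpr r.nest_ne_zero
    rw [List.getD_eq_getElem _ _ (List.length_pos_iff.mpr hne), List.getElem_zero]
    exact DyckWord.head_eq_U r.nest hne
  have h0 := congrFun h ⟨0, h02⟩
  simp only [F, hhead, stepInt, mul_one] at h0
  have hb : b = b' := by
    cases b <;> cases b' <;> simp_all <;> omega
  subst hb
  have hql : q.nest.toList = q'.nest.toList := by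
    apply List.ext_getElem (by rw [hlen, hlen'])
    intro i h1 h2
    have hi : i < 2 * m := by omega
    have := congrFun h ⟨i, hi⟩
    simp only [F] at this
    have hst : stepInt (q.nest.toList.getD i U) = stepInt (q'.nest.toList.getD i U) := by
      cases b <;> simpa using this
    have heq := stepInt_inj hst
    rw [List.getD_eq_getElem _ _ h1, List.getD_eq_getElem _ _ h2] at heq
    exact heq
  have : q = q' := by
    apply DyckWord.ext
    have h3 : U :: (q.toList ++ [D]) = U :: (q'.toList ++ [D]) := by
      simpa [DyckWord.nest] using hql
    simp only [List.cons.injEq, true_and] at h3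
    exact List.append_cancel_right h3
  simp [this]

lemma range_subset {m : ℕ} (hm : 1 ≤ m) : Set.range (F m) ⊆ S m := by
  rintro - ⟨⟨b, q, hq⟩, rfl⟩
  set ε : ℤ := if b then 1 else -1 with hε
  have hε1 : ε = 1 ∨ ε = -1 := by cases b <;> simp [hε]
  have hεne : ε ≠ 0 := by rcases hε1 with h | h <;> rw [h] <;> norm_num
  have hlen : q.nest.toList.length = 2 * m := len_nest hm q hq
  set x₀ : Fin (2 * m) → ℤ := fun i => stepInt (q.nest.toList.getD (i : ℕ) U) with hx₀
  have hofn : List.ofFn x₀ = q.nest.toList.map stepInt := ofFn_getD _ _ hlen _ _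
  have hscale : ∀ k : ℕ, (∑ i : Fin (2 * m), if (i : ℕ) < k then F m (b, ⟨q, hq⟩) i else 0)
      = ε * ((q.nest.toList.take k).map stepInt).sum := by
    intro k
    rw [List.map_take, ← hofn, ← sum_ite_eq_take, Finset.mul_sum]
    refine Finset.sum_congr rfl fun i _ => ?_
    simp only [F, hε, hx₀]
    split <;> ring
  have hcnt : ∀ k : ℕ, ((q.nest.toList.take k).map stepInt).sum
      = ((q.nest.toList.take k).count U : ℤ) - ((q.nest.toList.take k).count D : ℤ) :=
    fun k => sum_map_stepInt _
  refine ⟨fun i => ?_, fun k hk1 hk2 => ?_, ?_⟩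
  · have hF : F m (b, ⟨q, hq⟩) i = ε * stepInt (q.nest.toList.getD (i : ℕ) U) := rfl
    rw [hF]
    rcases hε1 with h | h <;>
      rcases stepInt_dichotomy (q.nest.toList.getD (i : ℕ) U) with h' | h' <;>
      rw [h, h'] <;> norm_num
  · rw [hscale k]
    apply mul_ne_zero hεne
    rw [hcnt k]
    have hnested := DyckWord.IsNested.nest (p := q)
    have hstrict := hnested.2 (i := k) (by omega) (by omega)
    omega
  · have h1 : (∑ i : Fin (2 * m), F m (b, ⟨q, hq⟩) i)
        = ∑ i : Fin (2 * m), if (i : ℕ) < 2 * m then F m (b, ⟨q, hq⟩) i else 0 :=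
      Finset.sum_congr rfl fun i _ => by rw [if_pos i.2]
    rw [h1, hscale, List.take_of_length_le (le_of_eq hlen), sum_map_stepInt,
      ← q.nest.count_U_eq_count_D]
    ring

lemma subset_range {m : ℕ} (hm : 1 ≤ m) : S m ⊆ Set.range (F m) := by
  rintro x ⟨hx1, hx2, hx3⟩
  have h02 : (0 : ℕ) < 2 * m := by omega
  set ε : ℤ := x ⟨0, h02⟩ with hε
  have hε1 : ε = 1 ∨ ε = -1 := hx1 _
  have hεsq : ε * ε = 1 := by rcases hε1 with h | h <;> rw [h] <;> ring
  set y : Fin (2 * m) → ℤ := fun i => ε * x i with hy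
  have hy1 : ∀ i, y i = 1 ∨ y i = -1 := fun i => by
    rcases hε1 with h | h <;> rcases hx1 i with h' | h' <;> simp [hy, h, h']
  have hy0 : y ⟨0, h02⟩ = 1 := hεsq
  set L : List ℤ := List.ofFn y with hL
  have hLlen : L.length = 2 * m := by simp [hL]
  have hQ : ∀ k : ℕ, (L.take k).sum
      = ε * (∑ i : Fin (2 * m), if (i : ℕ) < k then x i else 0) := by
    intro k
    rw [hL, ← sum_ite_eq_take, Finset.mul_sum]
    exact Finset.sum_congr rfl fun i _ => by simp only [hy]; split <;> ring
  have hful : ∀ k : ℕ, 2 * m ≤ k →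
      (∑ i : Fin (2 * m), if (i : ℕ) < k then x i else 0) = 0 := by
    intro k hk
    rw [← hx3]
    exact Finset.sum_congr rfl fun i _ => by rw [if_pos (lt_of_lt_of_le i.2 hk)]
  have hQne : ∀ k : ℕ, 1 ≤ k → k ≤ 2 * m - 1 → (L.take k).sum ≠ 0 := fun k h1 h2 => by
    rw [hQ k]
    exact mul_ne_zero (by rcases hε1 with h | h <;> rw [h] <;> norm_num) (hx2 k h1 h2)
  have hQstep : ∀ k : ℕ, (hk : k < 2 * m) →
      (L.take (k + 1)).sum = (L.take k).sum + y ⟨k, hk⟩ := by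
    intro k hk
    rw [sum_take_succ]
    congr 1
    exact getD_ofFn y 0 ⟨k, hk⟩
  have hpos : ∀ k : ℕ, 1 ≤ k → k ≤ 2 * m - 1 → 1 ≤ (L.take k).sum := by
    intro k
    induction k with
    | zero => omega
    | succ k ih =>
      intro _ hk
      obtain ⟨c, hc, h2⟩ : ∃ c : ℤ, (c = 1 ∨ c = -1) ∧
          (L.take (k + 1)).sum = (L.take k).sum + c :=
        ⟨_, hy1 _, hQstep k (by omega)⟩
      rcases Nat.eq_zero_or_pos k with rfl | hk1
      · have h0 : (L.take 0).sum = 0 := by simp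
        have h1 : (L.take 1).sum = y ⟨0, h02⟩ := by rw [hQstep 0 h02, h0, zero_add]
        rw [h1, hy0]
      · have h1 := ih hk1 (by omega)
        have h3 := hQne (k + 1) (by omega) hk
        rcases hc with h | h <;> omega
  have hnn : ∀ k : ℕ, 0 ≤ (L.take k).sum := by
    intro k
    rcases Nat.eq_zero_or_pos k with rfl | h1
    · simp
    rcases le_or_gt k (2 * m - 1) with h2 | h2
    · linarith [hpos k h1 h2]
    · rw [hQ k, hful k (by omega), mul_zero]
  set w : List DyckStep := List.ofFn (fun i : Fin (2 * m) => if y i = 1 then U else D) with hw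
  have hwlen : w.length = 2 * m := by simp [hw]
  have hmap : w.map stepInt = L := by
    rw [hw, List.map_ofFn, hL]
    congr 1
    funext i
    rcases hy1 i with h | h <;> simp [Function.comp, h, stepInt]
  have hcount : ∀ k : ℕ, ((w.take k).count U : ℤ) - ((w.take k).count D : ℤ)
      = (L.take k).sum := by
    intro k
    rw [← sum_map_stepInt, List.map_take, hmap]
  have hLsum : L.sum = 0 := by
    have := hQ (2 * m)
    rw [List.take_of_length_le (le_of_eq hLlen)] at this
    rw [this, hful (2 * m) le_rfl, mul_zero]
  have hcUD : w.count U = w.count D := by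
    have := hcount (2 * m)
    rw [List.take_of_length_le (le_of_eq hwlen), List.take_of_length_le (le_of_eq hLlen),
      hLsum] at this
    omega
  set p : DyckWord := ⟨w, hcUD, fun k => by have h1 := hcount k; have h2 := hnn k; omega⟩
    with hp
  have hplen : p.toList.length = 2 * m := hwlen
  have hps : p.semilength = m := by
    have := p.two_mul_semilength_eq_length
    rw [hplen] at this
    omega
  have hn : p.IsNested := by
    refine ⟨DyckWord.toList_ne_nil.mp (fun hnil => by
      rw [hnil] at hplen; simp at hplen; omega), fun k hk1 hk2 => ?_⟩
    rw [hplen] at hk2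
    show (w.take k).count D < (w.take k).count U
    have h1 := hcount k
    have h2 := hpos k hk1 (by omega)
    omega
  set q : DyckWord := p.denest hn with hqdef
  have hqn : q.nest = p := DyckWord.nest_denest p hn
  have hq : q.semilength = m - 1 := by
    have h1 : q.nest.semilength = q.semilength + 1 := DyckWord.semilength_nest
    rw [hqn, hps] at h1
    omega
  set b : Bool := decide (ε = 1) with hb
  have hbe : (if b then (1 : ℤ) else -1) = ε := by
    rcases hε1 with h | h <;> simp [hb, h]
  refine ⟨(b, ⟨q, hq⟩), ?_⟩
  funext i
  have hgd : q.nest.toList.getD (i : ℕ) U = (if y i = 1 then U else D) := by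
    rw [hqn]
    show w.getD (i : ℕ) U = _
    exact getD_ofFn _ _ i
  have hst : stepInt (q.nest.toList.getD (i : ℕ) U) = y i := by
    rw [hgd]
    rcases hy1 i with h | h <;> simp [h, stepInt]
  simp only [F, hbe, hst, hy]
  rw [← mul_assoc, hεsq, one_mul]

lemma card_S {m : ℕ} (hm : 1 ≤ m) : Nat.card (S m) = 2 * catalan (m - 1) := by
  have hr : S m = Set.range (F m) :=
    le_antisymm (subset_range hm) (range_subset hm)
  rw [hr, Nat.card_range_of_injective (F_inj hm), Nat.card_eq_fintype_card,
    Fintype.card_prod, Fintype.card_bool, DyckWord.card_dyckWord_semilength_eq_catalan]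

end FirstReturnAux

/-- First return to the origin: the number of `±1`-valued sequences of length `2m` whose
partial sums are nonzero at steps `1,…,2m-1` and zero at step `2m` equals
`(1/(2m-1)) · binom(2m, m)`. -/
theorem first_return_count (m : ℕ) (hm : 1 ≤ m) :
    (Set.ncard {x : Fin (2 * m) → ℤ |
        (∀ i, x i = 1 ∨ x i = -1) ∧
        (∀ k : ℕ, 1 ≤ k → k ≤ 2 * m - 1 →
          (∑ i : Fin (2 * m), if (i : ℕ) < k then x i else 0) ≠ 0) ∧
        (∑ i : Fin (2 * m), x i) = 0} : ℝ)
      = (1 / (2 * (m : ℝ) - 1)) * (Nat.choose (2 * m) m : ℝ) := by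
  have hcard : Set.ncard {x : Fin (2 * m) → ℤ |
        (∀ i, x i = 1 ∨ x i = -1) ∧
        (∀ k : ℕ, 1 ≤ k → k ≤ 2 * m - 1 →
          (∑ i : Fin (2 * m), if (i : ℕ) < k then x i else 0) ≠ 0) ∧
        (∑ i : Fin (2 * m), x i) = 0} = 2 * catalan (m - 1) := by
    rw [← Nat.card_coe_set_eq]
    exact FirstReturnAux.card_S hm
  rw [hcard]
  clear hcard
  -- arithmetic
  have hm' : (m : ℝ) ≠ 0 := Nat.cast_ne_zero.mpr (by omega)
  have hden : 2 * (m : ℝ) - 1 ≠ 0 := by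
    have : (1 : ℝ) ≤ (m : ℝ) := by exact_mod_cast hm
    nlinarith
  have hc1 : (m : ℝ) * (catalan (m - 1) : ℝ) = ((m - 1).centralBinom : ℝ) := by
    have h := succ_mul_catalan_eq_centralBinom (m - 1)
    have h2 : m - 1 + 1 = m := by omega
    rw [h2] at h
    exact_mod_cast h
  have hc2 : (m : ℝ) * (((2 * m).choose m : ℕ) : ℝ)
      = 2 * (2 * (m : ℝ) - 1) * ((m - 1).centralBinom : ℝ) := by
    have h := Nat.succ_mul_centralBinom_succ (m - 1)
    have h2 : m - 1 + 1 = m := by omega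
    rw [h2] at h
    have h3 : m.centralBinom = (2 * m).choose m := Nat.centralBinom_eq_two_mul_choose m
    rw [h3] at h
    have h4 : ((2 * (m - 1) + 1 : ℕ) : ℝ) = 2 * (m : ℝ) - 1 := by
      push_cast [Nat.cast_sub hm]
      ring
    calc (m : ℝ) * (((2 * m).choose m : ℕ) : ℝ)
        = ((m * (2 * m).choose m : ℕ) : ℝ) := by push_cast; ring
      _ = ((2 * (2 * (m - 1) + 1) * (m - 1).centralBinom : ℕ) : ℝ) := by rw [h]
      _ = 2 * (2 * (m : ℝ) - 1) * ((m - 1).centralBinom : ℝ) := by push_cast [h4]; ring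
  have hC : (((2 * m).choose m : ℕ) : ℝ) = 2 * (2 * (m : ℝ) - 1) * (catalan (m - 1) : ℝ) := by
    apply mul_left_cancel₀ hm'
    rw [hc2, ← hc1]
    ring
  rw [hC]
  push_cast
  field_simp
end
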